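/- arXiv:1703.06061 — 5 statements merged into one kernel-verified Lean document; each statement's English description precedes it below -/
import Mathlib

section
/- A string w contains at most g(w)·k distinct factors of length k, where g(w) is the size of a smallest straight-line program producing w. -/
/-- A straight-line program over alphabet `α`: nonterminals `0, ..., n-1`, each with a
single nonempty right-hand side referring only to smaller nonterminals (acyclicity). -/
structure SLP (α : Type) where
  n : ℕ
  rhs : Fin n → List (Fin n ⊕ α)
  start : Fin n
  dec : ∀ i j, Sum.inl j ∈ rhs i → (j : ℕ) < (i : ℕ)
  ne : ∀ i, rhs i ≠ []

/-- The word derived by nonterminal `i`. -/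
def SLP.val {α : Type} (G : SLP α) (i : Fin G.n) : List α :=
  ((G.rhs i).attach.map (fun s =>
    match h : s.1 with
    | Sum.inl j => G.val j
    | Sum.inr a => [a])).flatten
termination_by (i : ℕ)
decreasing_by exact G.dec i _ (h ▸ s.2)

/-- The size of an SLP: total length of all right-hand sides. -/
def SLP.size {α : Type} (G : SLP α) : ℕ := ∑ i, (G.rhs i).length

def SLP.produces {α : Type} (G : SLP α) (w : List α) : Prop := G.val G.start = w

/-- `gsize w` is the size of a smallest SLP producing `w`. -/
noncomputable def gsize {α : Type} (w : List α) : ℕ :=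
  sInf {s | ∃ G : SLP α, G.produces w ∧ G.size = s}

def SLP.symVal {α : Type} (G : SLP α) : (Fin G.n ⊕ α) → List α
  | Sum.inl j => G.val j
  | Sum.inr a => [a]

lemma SLP.val_eq {α : Type} (G : SLP α) (i : Fin G.n) :
    G.val i = ((G.rhs i).map G.symVal).flatten := by
  rw [SLP.val]
  congr 1
  have : ∀ s : {x // x ∈ G.rhs i},
      (match h : s.1 with | Sum.inl j => G.val j | Sum.inr a => [a]) = G.symVal s.1 := by
    rintro ⟨(j|a), hs⟩ <;> rfl
  rw [List.map_congr_left fun s _ => this s]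
  exact List.attach_map_val

/-- prefix length of the first `j` blocks of `rhs i`. -/
def SLP.B {α : Type} (G : SLP α) (i : Fin G.n) (j : ℕ) : ℕ :=
  ((((G.rhs i).take j).map G.symVal).flatten).length

lemma SLP.B_zero {α : Type} (G : SLP α) (i : Fin G.n) : G.B i 0 = 0 := rfl

lemma SLP.B_mono {α : Type} (G : SLP α) (i : Fin G.n) : Monotone (G.B i) := by
  intro a b hab
  unfold SLP.B
  have h1 : (G.rhs i).take a = ((G.rhs i).take b).take a := by
    rw [List.take_take, min_eq_left hab]
  rw [h1]
  set l := (G.rhs i).take b with hl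
  calc ((((l.take a)).map G.symVal).flatten).length
      ≤ (((l.take a).map G.symVal).flatten).length
        + (((l.drop a).map G.symVal).flatten).length := Nat.le_add_right _ _
    _ = ((l.map G.symVal).flatten).length := by
        rw [← List.length_append, ← List.flatten_append, ← List.map_append,
          List.take_append_drop]

lemma SLP.drop_B {α : Type} (G : SLP α) (i : Fin G.n) (j : ℕ) :
    (G.val i).drop (G.B i j) = (((G.rhs i).drop j).map G.symVal).flatten := by
  rw [SLP.val_eq]
  conv_lhs => rw [← List.take_append_drop j (G.rhs i)]
  rw [List.map_append, List.flatten_append, SLP.B, List.drop_left]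

lemma SLP.B_len {α : Type} (G : SLP α) (i : Fin G.n) :
    G.B i ((G.rhs i).length) = (G.val i).length := by
  rw [SLP.B, List.take_length, SLP.val_eq]

lemma SLP.B_succ {α : Type} (G : SLP α) (i : Fin G.n) (j : ℕ) (hj : j < (G.rhs i).length) :
    G.B i (j + 1) = G.B i j + (G.symVal ((G.rhs i).get ⟨j, hj⟩)).length := by
  unfold SLP.B
  rw [List.take_succ, List.map_append, List.flatten_append, List.length_append]
  congr 1
  simp [List.getElem?_eq_getElem hj]

lemma SLP.key {α : Type} (G : SLP α) (k : ℕ) (hk : 1 ≤ k) :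
    ∀ (N : ℕ) (i : Fin G.n), (i : ℕ) < N → ∀ v : List α, v.length = k → v <:+: G.val i →
    ∃ (i' : Fin G.n) (j d : ℕ), j < (G.rhs i').length ∧ d < k ∧
      v = ((G.val i').drop (G.B i' j - d)).take k := by
  intro N
  induction N with
  | zero => intro i hi; omega
  | succ N IH =>
    intro i hi v hvk hvf
    obtain ⟨s, t, hst⟩ := hvf
    set L := G.val i with hL
    set p := s.length with hp
    have hpL : p + k ≤ L.length := by
      have := congrArg List.length hst
      simp [hvk] at this
      omega
    have hdrop : L.drop p = v ++ t := by
      rw [← hst, List.append_assoc, List.drop_left]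
    have hv : v = (L.drop p).take k := by
      rw [hdrop, List.take_left' hvk]
    set m := (G.rhs i).length with hm
    set j0 := Nat.findGreatest (fun j => G.B i j ≤ p) m with hj0
    have h0 : G.B i j0 ≤ p :=
      Nat.findGreatest_spec (P := fun j => G.B i j ≤ p) (Nat.zero_le m)
        (by show G.B i 0 ≤ p; rw [SLP.B_zero]; exact Nat.zero_le p)
    have hj0m : j0 ≤ m := Nat.findGreatest_le m
    have hBm : G.B i m = L.length := G.B_len i
    have hj0lt : j0 < m := by
      rcases lt_or_eq_of_le hj0m with h | h
      · exact h
      · exfalso; rw [h, hBm] at h0; omega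
    have hnext : p < G.B i (j0 + 1) := by
      by_contra h
      push_neg at h
      exact Nat.findGreatest_is_greatest (Nat.lt_succ_self j0) hj0lt h
    by_cases hcase : p + k ≤ G.B i (j0 + 1)
    · -- contained in block j0
      set block := G.symVal ((G.rhs i).get ⟨j0, hj0lt⟩) with hblock
      set rest := (((G.rhs i).drop (j0 + 1)).map G.symVal).flatten with hrest
      have hsplit : L.drop (G.B i j0) = block ++ rest := by
        rw [SLP.drop_B, List.drop_eq_getElem_cons hj0lt]
        simp only [List.map_cons, List.flatten_cons]
        rfl
      have hBs : G.B i (j0 + 1) = G.B i j0 + block.length := G.B_succ i j0 hj0lt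
      set q := p - G.B i j0 with hq
      have hqk : q + k ≤ block.length := by omega
      have hdq : L.drop p = block.drop q ++ rest := by
        have h1 : L.drop p = (L.drop (G.B i j0)).drop q := by
          rw [List.drop_drop]; congr 1; omega
        rw [h1, hsplit, List.drop_append_of_le_length (by omega)]
      have hv2 : v = (block.drop q).take k := by
        rw [hv, hdq, List.take_append_of_le_length (by simp; omega)]
      rcases hget : (G.rhs i).get ⟨j0, hj0lt⟩ with j' | a
      · -- nonterminal: recurse
        have hblk : block = G.val j' := by rw [hblock, hget]; rfl
        have hj'i : (j' : ℕ) < (i : ℕ) :=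
          G.dec i j' (by rw [← hget]; exact List.get_mem _ _)
        have hvj : v <:+: G.val j' := by
          rw [hv2, ← hblk]
          exact ((List.take_prefix _ _).isInfix.trans (List.drop_suffix _ _).isInfix)
        exact IH j' (by omega) v hvk hvj
      · -- terminal: k = 1, v = [a]
        have hblk : block = [a] := by rw [hblock, hget]; rfl
        refine ⟨i, j0, 0, hj0lt, by omega, ?_⟩
        have hq0 : q = 0 := by rw [hblk] at hqk; simp at hqk; omega
        have hk1 : k = 1 := by rw [hblk] at hqk; simp at hqk; omega
        rw [Nat.sub_zero, hsplit, hv2, hq0, List.drop_zero,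
          List.take_append_of_le_length (by rw [hblk]; simp; omega)]
    · -- crossing boundary j0+1
      push_neg at hcase
      have hjlt : j0 + 1 < m := by
        by_contra hcon
        push_neg at hcon
        have := G.B_mono i hcon
        rw [hBm] at this
        omega
      refine ⟨i, j0 + 1, G.B i (j0 + 1) - p, hjlt, by omega, ?_⟩
      have : G.B i (j0 + 1) - (G.B i (j0 + 1) - p) = p := by omega
      rw [this, ← hv]

lemma SLP.count_factors {α : Type} (G : SLP α) (w : List α) (hG : G.val G.start = w)
    (k : ℕ) (hk : 1 ≤ k) :
    {v : List α | v.length = k ∧ v <:+: w}.ncard ≤ G.size * k := by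
  classical
  set F : ((Σ i : Fin G.n, Fin (G.rhs i).length) × Fin k) → List α :=
    fun x => ((G.val x.1.1).drop (G.B x.1.1 x.1.2 - x.2)).take k with hF
  have hsub : {v : List α | v.length = k ∧ v <:+: w} ⊆ Set.range F := by
    rintro v ⟨hvk, hvf⟩
    obtain ⟨i', j, d, hj, hd, hv⟩ :=
      G.key k hk G.n G.start G.start.2 v hvk (hG ▸ hvf)
    exact ⟨⟨⟨i', ⟨j, hj⟩⟩, ⟨d, hd⟩⟩, hv.symm⟩
  calc {v : List α | v.length = k ∧ v <:+: w}.ncard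
      ≤ (Set.range F).ncard := Set.ncard_le_ncard hsub (Set.finite_range F)
    _ ≤ Nat.card ((Σ i : Fin G.n, Fin (G.rhs i).length) × Fin k) := by
        rw [← Set.image_univ]
        exact (Set.ncard_image_le Set.finite_univ).trans (le_of_eq (Set.ncard_univ _))
    _ = G.size * k := by
        simp [Nat.card_eq_fintype_card, SLP.size, Finset.sum_mul]

def trivSLP {α : Type} (w : List α) (hw : w ≠ []) : SLP α where
  n := 1
  rhs := fun _ => w.map Sum.inr
  start := ⟨0, one_pos⟩
  dec := by intro i j hj; simp at hj
  ne := by intro i; simp [hw]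

lemma gsize_mem {α : Type} (w : List α) (hw : w ≠ []) :
    ∃ G : SLP α, G.produces w ∧ G.size = gsize w := by
  have hne : {s | ∃ G : SLP α, G.produces w ∧ G.size = s}.Nonempty := by
    refine ⟨(trivSLP w hw).size, trivSLP w hw, ?_, rfl⟩
    show SLP.val _ _ = w
    rw [SLP.val_eq]
    simp only [trivSLP, List.map_map, Function.comp_def, SLP.symVal]
    have h2 : ∀ l : List α, (List.map (fun x => [x]) l).flatten = l := by
      intro l; induction l <;> simp [*]
    exact h2 w
  exact Nat.sInf_mem hne


/-- A string `w` contains at most `g(w) * k` distinct factors of length `k`. -/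
theorem repair_stmt_0 {α : Type} (w : List α) (hw : w ≠ []) (k : ℕ) (hk : 1 ≤ k) :
    {v : List α | v.length = k ∧ v <:+: w}.ncard ≤ gsize w * k := by
  obtain ⟨G, hGp, hGs⟩ := gsize_mem w hw
  exact hGs ▸ G.count_factors w hGp k hk
end

section
/- Let h : {0,1}* → {0,1}* be the homomorphism with h(0)=01, h(1)=10, let B be a binary word in which every factor of length m occurs at most once, and let w = h(u) for some factor u of B. Then every factor of w of length 2m + 2 occurs at most once in w. -/
/-- The number of occurrences (starting positions) of `x` as a factor of `w`. -/
def countOcc {σ : Type} [DecidableEq σ] (x w : List σ) : ℕ :=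
  ((List.range (w.length + 1)).filter (fun i => (w.drop i).take x.length = x)).length

/-- The homomorphism `h` with `h(0) = 01` and `h(1) = 10`, applied letter by letter
(`true` plays the role of `1`). -/
def hmap (u : List Bool) : List Bool :=
  u.flatMap (fun b => if b then [true, false] else [false, true])

lemma hmap_cons (c : Bool) (t : List Bool) : hmap (c :: t) = c :: (!c) :: hmap t := by
  cases c <;> rfl

lemma hmap_length (u : List Bool) : (hmap u).length = 2 * u.length := by
  induction u with
  | nil => rfl
  | cons c t ih => rw [hmap_cons]; simp [ih]; ring

lemma hmap_drop (u : List Bool) : ∀ a, (hmap u).drop (2*a) = hmap (u.drop a) := by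
  induction u with
  | nil => intro a; simp [hmap]
  | cons c t ih =>
    intro a
    cases a with
    | zero => simp
    | succ a =>
      rw [hmap_cons, show 2 * (a+1) = 2*a + 1 + 1 by ring]
      simpa using ih a

lemma hmap_take (u : List Bool) : ∀ a, (hmap u).take (2*a) = hmap (u.take a) := by
  induction u with
  | nil => intro a; simp [hmap]
  | cons c t ih =>
    intro a
    cases a with
    | zero => simp [hmap]
    | succ a =>
      rw [hmap_cons, show 2 * (a+1) = 2*a + 1 + 1 by ring]
      simp [List.take_succ_cons, ih a, hmap_cons]

lemma hmap_inj : ∀ {a b : List Bool}, hmap a = hmap b → a = b := by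
  intro a
  induction a with
  | nil => intro b h; cases b with
    | nil => rfl
    | cons c t => rw [hmap_cons] at h; simp [hmap] at h
  | cons c t ih =>
    intro b h
    cases b with
    | nil => rw [hmap_cons] at h; simp [hmap] at h
    | cons d s => rw [hmap_cons, hmap_cons] at h
                  simp at h
                  exact by rw [h.1, ih h.2]

lemma decode_even {u v : List Bool} {m a : ℕ} (hv : v.length = 2*m+2)
    (h : ((hmap u).drop (2*a)).take (2*m+2) = v) :
    hmap ((u.drop a).take (m+1)) = v ∧ a + (m+1) ≤ u.length := by
  rw [hmap_drop] at h
  have hlen : 2*m+2 ≤ (hmap (u.drop a)).length := by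
    have := congrArg List.length h
    simp [hv] at this
    omega
  rw [hmap_length, List.length_drop] at hlen
  constructor
  · rw [← hmap_take, show 2*(m+1) = 2*m+2 by ring, h]
  · omega

lemma decode_odd {u v : List Bool} {m a : ℕ} (hv : v.length = 2*m+2)
    (h : ((hmap u).drop (2*a+1)).take (2*m+2) = v) :
    hmap ((u.drop (a+1)).take m) = (v.drop 1).take (2*m) ∧ a + 1 + m ≤ u.length := by
  rw [← List.drop_drop, hmap_drop] at h
  rcases hd : u.drop a with _ | ⟨c, t⟩
  · rw [hd] at h
    simp [hmap] at h
    rw [h] at hv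
    simp at hv
  · rw [hd, hmap_cons] at h
    simp only [List.drop_succ_cons, List.drop_zero] at h
    have ht : t = u.drop (a+1) := by
      rw [← List.drop_drop, hd]; rfl
    rw [show (2*m+2) = (2*m+1)+1 by ring, List.take_succ_cons] at h
    have h2 : (hmap t).take (2*m+1) = v.drop 1 := by rw [← h]; rfl
    have hlen : 2*m+1 ≤ (hmap t).length := by
      have := congrArg List.length h2
      simp [hv] at this
      omega
    have hlen2 : a + 1 + m ≤ u.length := by
      rw [hmap_length] at hlen
      have : t.length = u.length - (a+1) := by rw [ht, List.length_drop]
      omega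
    refine ⟨?_, hlen2⟩
    rw [← ht, ← hmap_take]
    rw [← h2, List.take_take]
    congr 1
    omega

lemma shift_eq : ∀ (y t : List Bool), t.length = y.length + 1 →
    hmap y = ((hmap t).drop 1).take (2 * y.length) → t.dropLast = t.tail := by
  intro y
  induction y with
  | nil =>
    intro t ht _
    rcases t with _ | ⟨c, t'⟩
    · simp
    · simp at ht
      subst ht
      simp
  | cons d y' ih =>
    intro t ht heq
    rcases t with _ | ⟨c, t'⟩
    · simp at ht
    rcases t' with _ | ⟨c2, t''⟩
    · simp at ht
    rw [hmap_cons] at heq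
    rw [hmap_cons, hmap_cons] at heq
    simp only [List.drop_succ_cons, List.drop_zero] at heq
    rw [show 2 * (d :: y').length = (y'.length * 2 + 1) + 1 by simp; ring] at heq
    rw [List.take_succ_cons, List.take_succ_cons] at heq
    simp only [List.cons.injEq] at heq
    obtain ⟨h1, h2, h3⟩ := heq
    have hc : c2 = c := by
      rw [h1] at h2; simp at h2; exact h2.symm
    have ih' : (c2 :: t'').dropLast = (c2 :: t'').tail := by
      apply ih (c2 :: t'')
      · simpa using ht
      · rw [hmap_cons]
        simp only [List.drop_succ_cons, List.drop_zero]
        rw [Nat.mul_comm 2 y'.length]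
        exact h3
    rcases t'' with _ | ⟨c3, t3⟩
    · simp [hc]
    · have hdl : (c :: c2 :: c3 :: t3).dropLast = c :: (c2 :: c3 :: t3).dropLast := rfl
      rw [hdl, ih', hc]
      rfl

lemma key_mixed {u v : List Bool} {m a b : ℕ} (hv : v.length = 2*m+2)
    (he : ((hmap u).drop (2*a)).take (2*m+2) = v)
    (ho : ((hmap u).drop (2*b+1)).take (2*m+2) = v) :
    (u.drop a).take m = (u.drop (a+1)).take m ∧ a + 1 + m ≤ u.length := by
  obtain ⟨ht, hta⟩ := decode_even hv he
  obtain ⟨hy, _⟩ := decode_odd hv ho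
  have hyl : ((u.drop (b+1)).take m).length = m := by
    have := congrArg List.length hy
    rw [hmap_length] at this
    simp [hv] at this
    simp [List.length_take, List.length_drop]
    omega
  have htl : ((u.drop a).take (m+1)).length = m + 1 := by
    simp [List.length_take, List.length_drop]; omega
  have hshift : ((u.drop a).take (m+1)).dropLast = ((u.drop a).take (m+1)).tail := by
    apply shift_eq ((u.drop (b+1)).take m) _ (by rw [htl, hyl])
    rw [hyl, ht]
    exact hy
  constructor
  · have h1 : ((u.drop a).take (m+1)).dropLast = (u.drop a).take m := by
      rw [List.dropLast_eq_take, htl, List.take_take]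
      congr 1
      omega
    have h2 : ((u.drop a).take (m+1)).tail = (u.drop (a+1)).take m := by
      rw [← List.drop_one, List.drop_take, List.drop_drop]
      congr 1
    rw [← h1, ← h2, hshift]
  · omega

lemma key {m : ℕ} (u v : List Bool) (hv : v.length = 2*m+2)
    {i j : ℕ} (hij : i ≠ j)
    (hi : ((hmap u).drop i).take (2*m+2) = v)
    (hj : ((hmap u).drop j).take (2*m+2) = v) :
    ∃ p q, p ≠ q ∧ p + m ≤ u.length ∧ q + m ≤ u.length ∧
      (u.drop p).take m = (u.drop q).take m := by
  rcases Nat.even_or_odd i with ⟨a, ha⟩ | ⟨a, ha⟩ <;>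
    rcases Nat.even_or_odd j with ⟨b, hb⟩ | ⟨b, hb⟩
  · -- both even
    rw [ha, show a + a = 2*a by ring] at hi
    rw [hb, show b + b = 2*b by ring] at hj
    obtain ⟨hta, hla⟩ := decode_even hv hi
    obtain ⟨htb, hlb⟩ := decode_even hv hj
    have heq : (u.drop a).take (m+1) = (u.drop b).take (m+1) := hmap_inj (by rw [hta, htb])
    refine ⟨a, b, by omega, by omega, by omega, ?_⟩
    have := congrArg (List.take m) heq
    rwa [List.take_take, List.take_take, show min m (m+1) = m by omega] at this
  · -- i even, j odd
    rw [ha, show a + a = 2*a by ring] at hi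
    rw [hb] at hj
    obtain ⟨heq, hl⟩ := key_mixed hv hi hj
    exact ⟨a, a+1, by omega, by omega, by omega, heq⟩
  · -- i odd, j even
    rw [ha] at hi
    rw [hb, show b + b = 2*b by ring] at hj
    obtain ⟨heq, hl⟩ := key_mixed hv hj hi
    exact ⟨b, b+1, by omega, by omega, by omega, heq⟩
  · -- both odd
    rw [ha] at hi
    rw [hb] at hj
    obtain ⟨hya, hla⟩ := decode_odd hv hi
    obtain ⟨hyb, hlb⟩ := decode_odd hv hj
    have heq : (u.drop (a+1)).take m = (u.drop (b+1)).take m :=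
      hmap_inj (by rw [hya, hyb])
    exact ⟨a+1, b+1, by omega, by omega, by omega, heq⟩


lemma list_two {α : Type} {L : List α} (h : 2 ≤ L.length) : ∃ p q rest, L = p :: q :: rest := by
  rcases L with _ | ⟨p, L⟩
  · simp at h
  rcases L with _ | ⟨q, r⟩
  · simp at h
  exact ⟨p, q, r, rfl⟩

lemma exists_two_occ {x w : List Bool} (h : 2 ≤ countOcc x w) :
    ∃ p q, p ≠ q ∧ (w.drop p).take x.length = x ∧ (w.drop q).take x.length = x := by
  unfold countOcc at h
  obtain ⟨p, q, rest, hL⟩ := list_two h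
  have hnd : ((List.range (w.length + 1)).filter
      (fun i => decide ((w.drop i).take x.length = x))).Nodup :=
    List.nodup_range.filter _
  rw [hL] at hnd
  have hpq : p ≠ q := by
    intro e
    subst e
    simp at hnd
  have hp : (w.drop p).take x.length = x := by
    have hm : p ∈ (List.range (w.length + 1)).filter
        (fun i => decide ((w.drop i).take x.length = x)) := by rw [hL]; simp
    simpa using (List.mem_filter.mp hm).2
  have hq : (w.drop q).take x.length = x := by
    have hm : q ∈ (List.range (w.length + 1)).filter
        (fun i => decide ((w.drop i).take x.length = x)) := by rw [hL]; simp
    simpa using (List.mem_filter.mp hm).2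
  exact ⟨p, q, hpq, hp, hq⟩

lemma two_le_countOcc {x w : List Bool} (hx : 1 ≤ x.length) {p q : ℕ} (hpq : p ≠ q)
    (hp : (w.drop p).take x.length = x) (hq : (w.drop q).take x.length = x) :
    2 ≤ countOcc x w := by
  unfold countOcc
  have hmem : ∀ r, (w.drop r).take x.length = x →
      r ∈ (List.range (w.length + 1)).filter (fun i => decide ((w.drop i).take x.length = x)) := by
    intro r hr
    rw [List.mem_filter]
    refine ⟨?_, by simpa using hr⟩
    rw [List.mem_range]
    by_contra hc
    push_neg at hc
    have hd : w.drop r = [] := List.drop_eq_nil_of_le (by omega)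
    rw [hd] at hr
    have := congrArg List.length hr
    simp at this
    omega
  calc 2 = ({p, q} : Finset ℕ).card := (Finset.card_pair hpq).symm
    _ ≤ ((List.range (w.length + 1)).filter
        (fun i => decide ((w.drop i).take x.length = x))).toFinset.card := by
        apply Finset.card_le_card
        intro z hz
        rw [Finset.mem_insert, Finset.mem_singleton] at hz
        rcases hz with rfl | rfl
        · exact List.mem_toFinset.mpr (hmem _ hp)
        · exact List.mem_toFinset.mpr (hmem _ hq)
    _ ≤ _ := List.toFinset_card_le _

lemma occ_lift (s u t x : List Bool) (p : ℕ)
    (hp : (u.drop p).take x.length = x) (hlen : p + x.length ≤ u.length) :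
    ((s ++ u ++ t).drop (s.length + p)).take x.length = x := by
  rw [List.append_assoc, List.drop_length_add_append, List.drop_append_of_le_length (by omega),
    List.take_append_of_le_length (by simp [List.length_drop]; omega)]
  exact hp

/-- If every factor of length `m` occurs at most once in `B` and `u` is a factor of `B`,
then every factor of length `2m + 2` occurs at most once in `h(u)`. -/
theorem repair_stmt_4 (m : ℕ) (hm : 1 ≤ m) (B u : List Bool)
    (hB : ∀ x : List Bool, x.length = m → countOcc x B ≤ 1) (hu : u <:+: B) :
    ∀ v : List Bool, v.length = 2 * m + 2 → countOcc v (hmap u) ≤ 1 := by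
  intro v hv
  by_contra hcon
  push_neg at hcon
  obtain ⟨i, j, hij, hi, hj⟩ := exists_two_occ (show 2 ≤ countOcc v (hmap u) by omega)
  rw [hv] at hi hj
  obtain ⟨p, q, hpq, hpl, hql, heq⟩ := key u v hv hij hi hj
  obtain ⟨s, t, rfl⟩ := hu
  have hxl : ((u.drop p).take m).length = m := by
    simp [List.length_take, List.length_drop]; omega
  have h1 : (((s ++ u ++ t)).drop (s.length + p)).take ((u.drop p).take m).length
      = (u.drop p).take m :=
    occ_lift s u t ((u.drop p).take m) p (by rw [hxl]) (by omega)
  have h2 : (((s ++ u ++ t)).drop (s.length + q)).take ((u.drop p).take m).length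
      = (u.drop p).take m :=
    occ_lift s u t ((u.drop p).take m) q (by rw [hxl]; exact heq.symm) (by omega)
  have hc := two_le_countOcc (x := (u.drop p).take m) (by omega)
    (show s.length + p ≠ s.length + q by omega) h1 h2
  have := hB _ hxl
  omega
end

section
/- On a unary input a^m with m ≥ 4, RePair produces the rules X_1 → aa and X_i → X_{i−1}X_{i−1} for 2 ≤ i ≤ ⌊log₂ m⌋ − 1, together with a start rule S → X_{t}X_{t} f_t(b_t) f_{t−1}(b_{t−1}) ⋯ f_1(b_1) f_0(b_0) where t = ⌊log₂ m⌋ − 1, b_{⌊log m⌋}⋯b_1b_0 is the binary representation of m, f_0(1) = a, f_i(1) = X_i, and f_i(0) = ε. In particular the resulting SLP has size Θ(log m + ν(m)) where ν(m) is the number of ones in the binary representation of m. -/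
/-- Symbols appearing in RePair's grammars: nonterminals (numbered) or terminals. -/
abbrev RSym (α : Type) := ℕ ⊕ α

/-- A grammar in RePair's working representation: the list of right-hand sides, where the
rule at position `i` is the rule of nonterminal `i` and the start nonterminal is `0`. -/
abbrev Grammar (α : Type) := List (List (RSym α))

def countNOAux {σ : Type} [DecidableEq σ] (γ : List σ) : ℕ → List σ → ℕ
  | 0, _ => 0
  | fuel + 1, w =>
    if w = [] then 0
    else if γ <+: w then 1 + countNOAux γ fuel (w.drop γ.length)
    else countNOAux γ fuel w.tail

/-- The maximal number of pairwise non-overlapping occurrences of `γ` (with `|γ| ≥ 1`)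
in `w`, computed by the left-to-right greedy strategy. -/
def countNO {σ : Type} [DecidableEq σ] (γ w : List σ) : ℕ := countNOAux γ w.length w

def replaceNOAux {σ : Type} [DecidableEq σ] (γ : List σ) (X : σ) : ℕ → List σ → List σ
  | 0, w => w
  | _ + 1, [] => []
  | fuel + 1, s :: tl =>
    if γ <+: (s :: tl) then X :: replaceNOAux γ X fuel ((s :: tl).drop γ.length)
    else s :: replaceNOAux γ X fuel tl

/-- Replace the non-overlapping occurrences of `γ` in `w`, left to right, by `X`. -/
def replaceNO {σ : Type} [DecidableEq σ] (γ : List σ) (X : σ) (w : List σ) : List σ :=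
  replaceNOAux γ X w.length w

/-- The number of pairwise non-overlapping occurrences of `γ` in the right-hand sides. -/
def freq {α : Type} [DecidableEq α] (G : Grammar α) (γ : List (RSym α)) : ℕ :=
  (G.map (countNO γ)).sum

/-- `γ` is a maximal string of `G`: it has length at least two, occurs at least twice
without overlap, and no strictly longer word occurs at least as many times. -/
def IsMaxStr {α : Type} [DecidableEq α] (G : Grammar α) (γ : List (RSym α)) : Prop :=
  2 ≤ γ.length ∧ 2 ≤ freq G γ ∧ ∀ δ, γ.length < δ.length → freq G δ < freq G γ

/-- One round of RePair: pick a most frequent maximal string `γ`, replace its occurrences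
left to right by the fresh nonterminal `G.length`, and append the new rule `X → γ`. -/
def RePairStep {α : Type} [DecidableEq α] (G G' : Grammar α) : Prop :=
  ∃ γ, IsMaxStr G γ ∧ (∀ δ, IsMaxStr G δ → freq G δ ≤ freq G γ) ∧
    G' = (G.map (fun r => replaceNO γ (Sum.inl G.length) r)) ++ [γ]

/-- `RePairSteps r G G'`: `G'` is obtained from `G` by `r` rounds of RePair. -/
inductive RePairSteps {α : Type} [DecidableEq α] : ℕ → Grammar α → Grammar α → Prop
  | refl (G) : RePairSteps 0 G G
  | tail {n : ℕ} {G₁ G₂ G₃ : Grammar α} :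
      RePairSteps n G₁ G₂ → RePairStep G₂ G₃ → RePairSteps (n + 1) G₁ G₃

/-- The initial grammar `S → w`. -/
def RePairInit {α : Type} (w : List α) : Grammar α := [w.map Sum.inr]

/-- `G` is an output of RePair on input `w`: reachable from `S → w` by rounds of RePair,
with no maximal string left. -/
def RePairRun {α : Type} [DecidableEq α] (w : List α) (G : Grammar α) : Prop :=
  (∃ n, RePairSteps n (RePairInit w) G) ∧ ∀ γ, ¬ IsMaxStr G γ

/-- The size of a grammar: total length of all right-hand sides. -/
def gramSize {α : Type} (G : Grammar α) : ℕ := (G.map List.length).sum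


section Aux
variable {σ : Type} [DecidableEq σ]

lemma countNOAux_mul_count_le (γ : List σ) (s : σ) :
    ∀ fuel w, countNOAux γ fuel w * γ.count s ≤ w.count s := by
  intro fuel
  induction fuel with
  | zero => intro w; simp [countNOAux]
  | succ n ih =>
    intro w
    rw [countNOAux]
    split
    · simp
    · split
      · rename_i hw hpre
        obtain ⟨r, hr⟩ := hpre
        have hdrop : w.drop γ.length = r := by rw [← hr]; simp
        calc (1 + countNOAux γ n (w.drop γ.length)) * γ.count s
            = γ.count s + countNOAux γ n (w.drop γ.length) * γ.count s := by ring
          _ ≤ γ.count s + (w.drop γ.length).count s := by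
              exact Nat.add_le_add_left (ih _) _
          _ = w.count s := by rw [hdrop, ← hr]; simp [List.count_append]
      · rename_i hw hpre
        calc countNOAux γ n w.tail * γ.count s ≤ w.tail.count s := ih _
          _ ≤ w.count s := by
              obtain ⟨a, w', rfl⟩ := List.exists_cons_of_ne_nil hw
              simp only [List.tail_cons]
              rw [List.count_cons]
              split <;> omega

lemma countNO_mul_count_le (γ w : List σ) (s : σ) :
    countNO γ w * γ.count s ≤ w.count s := countNOAux_mul_count_le γ s _ w

lemma countNO_le_count (γ w : List σ) (s : σ) (hs : s ∈ γ) :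
    countNO γ w ≤ w.count s := by
  have h := countNO_mul_count_le γ w s
  have h1 : 1 ≤ γ.count s := List.one_le_count_iff.mpr hs
  nlinarith

lemma countNOAux_eq_zero_of_lt (γ : List σ) :
    ∀ fuel w, w.length < γ.length → countNOAux γ fuel w = 0 := by
  intro fuel
  induction fuel with
  | zero => intro w _; simp [countNOAux]
  | succ n ih =>
    intro w hw
    rw [countNOAux]
    split
    · rfl
    · split
      · rename_i h hpre
        exact absurd hpre.length_le (by omega)
      · rename_i h _
        exact ih _ (by cases w with | nil => simp at h | cons a l => simp at hw ⊢; omega)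

lemma countNO_eq_zero_of_lt (γ w : List σ) (hw : w.length < γ.length) : countNO γ w = 0 :=
  countNOAux_eq_zero_of_lt γ _ w hw

lemma prefix_count {γ w : List σ} (h : γ <+: w) (s : σ) : γ.count s ≤ w.count s :=
  h.sublist.count_le s

lemma not_rep_prefix {x : σ} {j : ℕ} {w : List σ} (hcnt : w.count x < j) :
    ¬ (List.replicate j x <+: w) := by
  intro h
  have := prefix_count h x
  simp [List.count_replicate] at this
  omega

lemma countNOAux_rep (x : σ) (j : ℕ) (hj : 1 ≤ j) :
    ∀ fuel q tail, x ∉ tail → q + tail.length ≤ fuel →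
      countNOAux (List.replicate j x) fuel (List.replicate q x ++ tail) = q / j := by
  intro fuel
  induction fuel with
  | zero =>
    intro q tail hx hlen
    have hq : q = 0 := by omega
    subst hq
    simp [countNOAux, Nat.zero_div]
  | succ n ih =>
    intro q tail hx hlen
    have hcnt : (List.replicate q x ++ tail).count x = q := by
      simp [List.count_replicate, List.count_eq_zero_of_not_mem hx]
    by_cases hq : j ≤ q
    · have hpre : List.replicate j x <+: List.replicate q x ++ tail := by
        refine ⟨List.replicate (q - j) x ++ tail, ?_⟩
        rw [← List.append_assoc, ← List.replicate_add]
        congr 2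
        omega
      have hne : List.replicate q x ++ tail ≠ [] := by
        simp [List.append_eq_nil_iff]
        rintro rfl
        simp at hcnt
        omega
      rw [countNOAux, if_neg hne, if_pos hpre]
      have hdrop : (List.replicate q x ++ tail).drop (List.replicate j x).length
          = List.replicate (q - j) x ++ tail := by
        rw [List.length_replicate, List.drop_append_of_le_length (by simp; omega),
          List.drop_replicate]
      rw [hdrop, ih (q - j) tail hx (by omega)]
      rw [Nat.div_eq_sub_div (by omega) hq]
      omega
    · push_neg at hq
      have hpre : ¬ (List.replicate j x <+: List.replicate q x ++ tail) :=
        not_rep_prefix (by omega)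
      rcases Nat.eq_zero_or_pos q with rfl | hq0
      · cases tail with
        | nil => simp [countNOAux]
        | cons s tl =>
          rw [countNOAux, if_neg (by simp), if_neg (by simpa using hpre)]
          have : x ∉ tl := fun h => hx (List.mem_cons_of_mem _ h)
          have := ih 0 tl this (by simp at hlen ⊢; omega)
          simpa using this
      · obtain ⟨q', rfl⟩ : ∃ q', q = q' + 1 := ⟨q - 1, by omega⟩
        rw [countNOAux, if_neg (by simp), if_neg hpre]
        have htl : (List.replicate (q' + 1) x ++ tail).tail = List.replicate q' x ++ tail := by
          simp [List.replicate_succ]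
        rw [htl, ih q' tail hx (by omega)]
        rw [Nat.div_eq_of_lt (by omega), Nat.div_eq_of_lt (by omega)]

lemma countNO_rep (x : σ) (j q : ℕ) (hj : 1 ≤ j) (tail : List σ) (hx : x ∉ tail) :
    countNO (List.replicate j x) (List.replicate q x ++ tail) = q / j := by
  apply countNOAux_rep x j hj _ q tail hx
  simp

lemma replaceNOAux_rep (x y : σ) (j : ℕ) (hj : 1 ≤ j) :
    ∀ fuel q tail, x ∉ tail → q + tail.length ≤ fuel →
      replaceNOAux (List.replicate j x) y fuel (List.replicate q x ++ tail)
        = List.replicate (q / j) y ++ List.replicate (q % j) x ++ tail := by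
  intro fuel
  induction fuel with
  | zero =>
    intro q tail hx hlen
    have hq : q = 0 := by omega
    have ht : tail = [] := by
      cases tail with | nil => rfl | cons a l => simp at hlen
    subst hq; subst ht
    simp [replaceNOAux]
  | succ n ih =>
    intro q tail hx hlen
    by_cases hq : j ≤ q
    · obtain ⟨q', rfl⟩ : ∃ q', q = q' + 1 := ⟨q - 1, by omega⟩
      have hpre : List.replicate j x <+: List.replicate (q' + 1) x ++ tail := by
        refine ⟨List.replicate (q' + 1 - j) x ++ tail, ?_⟩
        rw [← List.append_assoc, ← List.replicate_add]
        congr 2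
        omega
      have hw : List.replicate (q' + 1) x ++ tail = x :: (List.replicate q' x ++ tail) := by
        simp [List.replicate_succ]
      have hdrop : (List.replicate (q' + 1) x ++ tail).drop (List.replicate j x).length
          = List.replicate (q' + 1 - j) x ++ tail := by
        rw [List.length_replicate, List.drop_append_of_le_length (by simp; omega),
          List.drop_replicate]
      rw [hw] at hpre hdrop ⊢
      rw [replaceNOAux, if_pos hpre]
      rw [hdrop, ih (q' + 1 - j) tail hx (by omega)]
      rw [Nat.div_eq_sub_div (by omega) hq, Nat.mod_eq_sub_mod hq]
      simp [List.replicate_succ]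
    · push_neg at hq
      have hcnt : (List.replicate q x ++ tail).count x = q := by
        simp [List.count_replicate, List.count_eq_zero_of_not_mem hx]
      have hpre : ¬ (List.replicate j x <+: List.replicate q x ++ tail) :=
        not_rep_prefix (by omega)
      rcases Nat.eq_zero_or_pos q with rfl | hq0
      · cases tail with
        | nil => simp [replaceNOAux]
        | cons s tl =>
          have hx' : x ∉ tl := fun h => hx (List.mem_cons_of_mem _ h)
          rw [show List.replicate 0 x ++ s :: tl = s :: tl by simp] at hpre ⊢
          rw [replaceNOAux, if_neg hpre]
          have := ih 0 tl hx' (by simp at hlen ⊢; omega)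
          simp at this
          simp [this, Nat.zero_div]
      · obtain ⟨q', rfl⟩ : ∃ q', q = q' + 1 := ⟨q - 1, by omega⟩
        have hw : List.replicate (q' + 1) x ++ tail = x :: (List.replicate q' x ++ tail) := by
          simp [List.replicate_succ]
        rw [hw] at hpre ⊢
        rw [replaceNOAux, if_neg hpre]
        rw [ih q' tail hx (by omega)]
        rw [Nat.div_eq_of_lt (by omega), Nat.div_eq_of_lt (by omega),
          Nat.mod_eq_of_lt (by omega), Nat.mod_eq_of_lt (by omega)]
        simp [List.replicate_succ]

lemma replaceNO_rep (x y : σ) (j q : ℕ) (hj : 1 ≤ j) (tail : List σ) (hx : x ∉ tail) :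
    replaceNO (List.replicate j x) y (List.replicate q x ++ tail)
      = List.replicate (q / j) y ++ List.replicate (q % j) x ++ tail := by
  apply replaceNOAux_rep x y j hj _ q tail hx
  simp

lemma countNO_pair_pair (s1 s2 t : σ) :
    countNO [s1, s2] [t, t] = if s1 = t ∧ s2 = t then 1 else 0 := by
  simp only [countNO, List.length_cons, List.length_nil]
  by_cases h : s1 = t ∧ s2 = t
  · obtain ⟨rfl, rfl⟩ := h
    simp [countNOAux]
  · rw [countNOAux, if_neg (by simp), if_neg, countNOAux, if_neg (by simp), if_neg,
      countNOAux]
    · simp [h]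
    · intro hpre
      exact absurd hpre.length_le (by simp)
    · intro hpre
      rw [List.cons_prefix_cons, List.cons_prefix_cons] at hpre
      exact h ⟨hpre.1, hpre.2.1⟩

lemma replaceNO_pair_pair (x y s t : σ) (h : ¬(x = s ∧ x = t)) :
    replaceNO [x, x] y [s, t] = [s, t] := by
  simp only [replaceNO, List.length_cons, List.length_nil]
  rw [replaceNOAux, if_neg, replaceNOAux, if_neg, replaceNOAux]
  · intro hpre
    exact absurd hpre.length_le (by simp)
  · intro hpre
    rw [List.cons_prefix_cons, List.cons_prefix_cons] at hpre
    exact h ⟨hpre.1, hpre.2.1⟩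

end Aux

attribute [-instance] Sum.instBEq

def sym (i : ℕ) : RSym Unit := if i = 0 then Sum.inr () else Sum.inl i

lemma sym_injective : Function.Injective sym := by
  intro a b h
  unfold sym at h
  split at h <;> split at h <;> simp_all

def tailW (m k : ℕ) : List (RSym Unit) :=
  (List.range k).reverse.flatMap (fun i => if m.testBit i then [sym i] else [])

lemma tailW_zero (m : ℕ) : tailW m 0 = [] := by simp [tailW]

lemma tailW_succ (m k : ℕ) :
    tailW m (k + 1) = (if m.testBit k then [sym k] else []) ++ tailW m k := by
  unfold tailW
  rw [List.range_succ, List.reverse_append]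
  simp

lemma mem_tailW {m k : ℕ} {s : RSym Unit} (h : s ∈ tailW m k) : ∃ i < k, s = sym i := by
  unfold tailW at h
  rw [List.mem_flatMap] at h
  obtain ⟨i, hi, hs⟩ := h
  rw [List.mem_reverse, List.mem_range] at hi
  refine ⟨i, hi, ?_⟩
  by_cases hb : m.testBit i <;> simp [hb] at hs
  exact hs

lemma sym_not_mem_tailW {m k i : ℕ} (h : k ≤ i) : sym i ∉ tailW m k := by
  intro hmem
  obtain ⟨j, hj, hs⟩ := mem_tailW hmem
  have := sym_injective hs
  omega

lemma count_tailW_le_one (m k : ℕ) (s : RSym Unit) : (tailW m k).count s ≤ 1 := by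
  induction k with
  | zero => simp [tailW_zero]
  | succ n ih =>
    rw [tailW_succ, List.count_append]
    by_cases hs : s = sym n
    · subst hs
      have h0 : (tailW m n).count (sym n) = 0 :=
        List.count_eq_zero_of_not_mem (sym_not_mem_tailW le_rfl)
      rw [h0]
      split <;> simp
    · have h0 : ((if m.testBit n then [sym n] else []) : List (RSym Unit)).count s = 0 := by
        split <;> simp [List.count_cons, hs, Ne.symm hs] <;> omega
      omega

def startW (m k : ℕ) : List (RSym Unit) := List.replicate (m / 2 ^ k) (sym k) ++ tailW m k

def Gk (m k : ℕ) : Grammar Unit :=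
  startW m k :: (List.range k).map (fun j => [sym j, sym j])

lemma count_startW_le_one (m k : ℕ) {s : RSym Unit} (hs : s ≠ sym k) :
    (startW m k).count s ≤ 1 := by
  unfold startW
  rw [List.count_append, List.count_replicate, if_neg (by simpa using fun h => hs h.symm)]
  simpa using count_tailW_le_one m k s

lemma freq_Gk (m k : ℕ) (γ : List (RSym Unit)) :
    freq (Gk m k) γ
      = countNO γ (startW m k) + ((List.range k).map (fun j => countNO γ [sym j, sym j])).sum := by
  simp [freq, Gk, List.map_map, Function.comp_def]

lemma sum_ite_sym (s : RSym Unit) (c k : ℕ) :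
    (((List.range k).map (fun j => if s = sym j then c else 0)).sum) ≤ c := by
  induction k with
  | zero => simp
  | succ n ih =>
    rw [List.range_succ, List.map_append, List.sum_append]
    by_cases hs : s = sym n
    · have h0 : ((List.range n).map (fun j => if s = sym j then c else 0)).sum = 0 := by
        apply List.sum_eq_zero
        intro t ht
        rw [List.mem_map] at ht
        obtain ⟨j, hj, rfl⟩ := ht
        rw [List.mem_range] at hj
        rw [if_neg]
        intro h
        have := sym_injective (hs ▸ h : sym n = sym j)
        omega
      subst hs
      simp [h0]
    · simp [hs]
      exact ih

lemma freq_Gk_rep (m k j : ℕ) (hj : 1 ≤ j) :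
    freq (Gk m k) (List.replicate j (sym k)) = m / 2 ^ k / j := by
  rw [freq_Gk]
  have hstart : countNO (List.replicate j (sym k)) (startW m k) = m / 2 ^ k / j :=
    countNO_rep _ _ _ hj _ (sym_not_mem_tailW le_rfl)
  have hrules : ((List.range k).map
      (fun i => countNO (List.replicate j (sym k)) [sym i, sym i])).sum = 0 := by
    apply List.sum_eq_zero
    intro t ht
    rw [List.mem_map] at ht
    obtain ⟨i, hi, rfl⟩ := ht
    rw [List.mem_range] at hi
    have hne : sym i ≠ sym k := fun h => by have := sym_injective h; omega
    have := countNO_le_count (List.replicate j (sym k)) [sym i, sym i] (sym k)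
      (by simp; omega)
    simpa [List.count_cons, hne.symm, hne] using this
  omega

lemma freq_Gk_le_one (m k : ℕ) (γ : List (RSym Unit)) (hlen : 2 ≤ γ.length)
    (hne : γ ≠ List.replicate γ.length (sym k)) : freq (Gk m k) γ ≤ 1 := by
  obtain ⟨s, hsmem, hs⟩ : ∃ s ∈ γ, s ≠ sym k := by
    by_contra h
    push_neg at h
    apply hne
    rw [List.eq_replicate_iff]
    exact ⟨rfl, h⟩
  rw [freq_Gk]
  rcases Nat.lt_or_ge 2 γ.length with h3 | h2
  · -- length ≥ 3
    have hrules : ((List.range k).map (fun i => countNO γ [sym i, sym i])).sum = 0 := by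
      apply List.sum_eq_zero
      intro t ht
      rw [List.mem_map] at ht
      obtain ⟨i, _, rfl⟩ := ht
      exact countNO_eq_zero_of_lt _ _ (by simp; omega)
    have hstart : countNO γ (startW m k) ≤ 1 :=
      le_trans (countNO_le_count _ _ s hsmem) (count_startW_le_one m k hs)
    omega
  · -- length = 2
    have hlen2 : γ.length = 2 := by omega
    obtain ⟨s1, s2, rfl⟩ : ∃ s1 s2, γ = [s1, s2] := by
      match γ, hlen2 with
      | [a, b], _ => exact ⟨a, b, rfl⟩
    by_cases heq : s1 = s2
    · subst heq
      have hs1 : s1 ≠ sym k := by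
        simp at hsmem
        rcases hsmem with rfl | rfl <;> exact hs
      have hstart : countNO [s1, s1] (startW m k) = 0 := by
        have hb := countNO_mul_count_le [s1, s1] (startW m k) s1
        have hc := count_startW_le_one m k hs1
        simp [List.count_cons] at hb
        omega
      have hrules : ((List.range k).map (fun i => countNO [s1, s1] [sym i, sym i])).sum ≤ 1 := by
        have heq2 : ∀ i, countNO [s1, s1] [sym i, sym i] = if s1 = sym i then 1 else 0 := by
          intro i
          rw [countNO_pair_pair]
          by_cases h : s1 = sym i <;> simp [h]
        calc ((List.range k).map (fun i => countNO [s1, s1] [sym i, sym i])).sum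
            = ((List.range k).map (fun i => if s1 = sym i then 1 else 0)).sum := by
              congr 1
              exact List.map_congr_left (fun i _ => heq2 i)
          _ ≤ 1 := sum_ite_sym s1 1 k
      omega
    · have hrules : ((List.range k).map (fun i => countNO [s1, s2] [sym i, sym i])).sum = 0 := by
        apply List.sum_eq_zero
        intro t ht
        rw [List.mem_map] at ht
        obtain ⟨i, _, rfl⟩ := ht
        rw [countNO_pair_pair, if_neg]
        rintro ⟨rfl, rfl⟩
        exact heq rfl
      have hsx : ∃ s', s' ∈ ([s1, s2] : List (RSym Unit)) ∧ s' ≠ sym k ∧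
          List.count s' [s1, s2] ≥ 1 := ⟨s, hsmem, hs, List.one_le_count_iff.mpr hsmem⟩
      have hstart : countNO [s1, s2] (startW m k) ≤ 1 :=
        le_trans (countNO_le_count _ _ s hsmem) (count_startW_le_one m k hs)
      omega

lemma div3_lt_div2 {q : ℕ} (hq : 4 ≤ q) : q / 3 < q / 2 := by
  have h2 : 2 ≤ q / 2 := by omega
  rw [Nat.div_lt_iff_lt_mul (by norm_num)]
  have : q < (q / 2) * 3 := by omega
  exact this

lemma maxstr_pair (m k : ℕ) (hq : 4 ≤ m / 2 ^ k) : IsMaxStr (Gk m k) [sym k, sym k] := by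
  have hrep : ([sym k, sym k] : List (RSym Unit)) = List.replicate 2 (sym k) := rfl
  have hfreq : freq (Gk m k) [sym k, sym k] = m / 2 ^ k / 2 := by
    rw [hrep]; exact freq_Gk_rep m k 2 (by norm_num)
  refine ⟨by simp, by omega, ?_⟩
  intro δ hδ
  simp at hδ
  rw [hfreq]
  by_cases hd : δ = List.replicate δ.length (sym k)
  · have : freq (Gk m k) δ = m / 2 ^ k / δ.length := by
      conv_lhs => rw [hd]
      exact freq_Gk_rep m k δ.length (by omega)
    rw [this]
    calc m / 2 ^ k / δ.length ≤ m / 2 ^ k / 3 := Nat.div_le_div_left (by omega) (by norm_num)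
      _ < m / 2 ^ k / 2 := div3_lt_div2 hq
  · have := freq_Gk_le_one m k δ (by omega) hd
    omega

lemma no_maxstr_small (m k : ℕ) (hq : m / 2 ^ k ≤ 3) : ∀ γ, ¬ IsMaxStr (Gk m k) γ := by
  rintro γ ⟨h2, hf, -⟩
  by_cases hd : γ = List.replicate γ.length (sym k)
  · have : freq (Gk m k) γ = m / 2 ^ k / γ.length := by
      conv_lhs => rw [hd]
      exact freq_Gk_rep m k γ.length (by omega)
    have hle : m / 2 ^ k / γ.length ≤ 3 / 2 :=
      le_trans (Nat.div_le_div_left h2 (by norm_num) : m / 2 ^ k / γ.length ≤ m / 2 ^ k / 2)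
        (Nat.div_le_div_right hq)
    omega
  · have := freq_Gk_le_one m k γ h2 hd
    omega

lemma Gk_length (m k : ℕ) : (Gk m k).length = k + 1 := by simp [Gk]

lemma sym_succ (k : ℕ) : sym (k + 1) = Sum.inl (k + 1) := by simp [sym]

lemma replace_startW (m k : ℕ) :
    replaceNO [sym k, sym k] (sym (k + 1)) (startW m k) = startW m (k + 1) := by
  have hrep : ([sym k, sym k] : List (RSym Unit)) = List.replicate 2 (sym k) := rfl
  unfold startW
  rw [hrep, replaceNO_rep _ _ 2 _ (by norm_num) _ (sym_not_mem_tailW le_rfl)]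
  rw [tailW_succ]
  have hdiv : m / 2 ^ (k + 1) = m / 2 ^ k / 2 := by
    rw [pow_succ, Nat.div_div_eq_div_mul]
  rw [hdiv, List.append_assoc]
  congr 1
  congr 1
  have hbit : m.testBit k = decide (m / 2 ^ k % 2 = 1) := Nat.testBit_eq_decide_div_mod_eq
  by_cases hb : m.testBit k
  · rw [if_pos hb]
    have : m / 2 ^ k % 2 = 1 := by
      rw [hbit] at hb; simpa using hb
    rw [this]
    rfl
  · rw [if_neg hb]
    have h1 : m / 2 ^ k % 2 ≠ 1 := by
      intro h; apply hb; rw [hbit]; simp [h]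
    have : m / 2 ^ k % 2 = 0 := by omega
    rw [this]
    rfl

lemma replace_Gk (m k : ℕ) :
    (Gk m k).map (fun r => replaceNO [sym k, sym k] (Sum.inl (Gk m k).length) r)
        ++ [[sym k, sym k]] = Gk m (k + 1) := by
  rw [Gk_length, ← sym_succ]
  unfold Gk
  rw [List.map_cons, replace_startW]
  rw [List.map_map, List.range_succ, List.map_append]
  have hmaps : List.map ((fun r => replaceNO [sym k, sym k] (sym (k + 1)) r)
        ∘ fun j => ([sym j, sym j] : List (RSym Unit))) (List.range k)
      = List.map (fun j => ([sym j, sym j] : List (RSym Unit))) (List.range k) := by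
    apply List.map_congr_left
    intro j hj
    rw [List.mem_range] at hj
    simp only [Function.comp]
    apply replaceNO_pair_pair
    rintro ⟨h, -⟩
    have := sym_injective h
    omega
  rw [hmaps]
  simp

lemma step_iff (m k : ℕ) (hq : 4 ≤ m / 2 ^ k) (G' : Grammar Unit) :
    RePairStep (Gk m k) G' ↔ G' = Gk m (k + 1) := by
  constructor
  · rintro ⟨γ, hmax, hbest, rfl⟩
    have hp := maxstr_pair m k hq
    have h1 : freq (Gk m k) [sym k, sym k] ≤ freq (Gk m k) γ := hbest _ hp
    have hfreq : freq (Gk m k) [sym k, sym k] = m / 2 ^ k / 2 :=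
      freq_Gk_rep m k 2 (by norm_num)
    have hl2 := hmax.1
    have hlen : γ.length = 2 := by
      rcases Nat.lt_or_ge 2 γ.length with h | h
      · have := hp.2.2 γ (by simpa using h)
        omega
      · omega
      -- γ.length ≥ 2 from hmax.1
    have hγ : γ = [sym k, sym k] := by
      by_cases hd : γ = List.replicate γ.length (sym k)
      · rw [hd, hlen]; rfl
      · have := freq_Gk_le_one m k γ hmax.1 hd
        have := hmax.2.1
        omega
    rw [hγ]
    exact replace_Gk m k
  · rintro rfl
    refine ⟨[sym k, sym k], maxstr_pair m k hq, ?_, (replace_Gk m k).symm⟩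
    intro δ hδ
    have hfreq : freq (Gk m k) [sym k, sym k] = m / 2 ^ k / 2 :=
      freq_Gk_rep m k 2 (by norm_num)
    rcases Nat.lt_or_ge 2 δ.length with h | h
    · exact le_of_lt ((maxstr_pair m k hq).2.2 δ (by simpa using h))
    · by_cases hd : δ = List.replicate δ.length (sym k)
      · have hl : δ.length = 2 := by have := hδ.1; omega
        rw [hd, hl]
        exact le_of_eq rfl
      · have := freq_Gk_le_one m k δ hδ.1 hd
        omega

lemma init_eq (m : ℕ) : RePairInit (List.replicate m ()) = Gk m 0 := by
  simp [RePairInit, Gk, startW, tailW_zero, sym, List.map_replicate]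

lemma steps_char (m : ℕ) {n : ℕ} {G₀ G : Grammar Unit} (h : RePairSteps n G₀ G)
    (h0 : G₀ = Gk m 0) : (∀ k < n, 4 ≤ m / 2 ^ k) ∧ G = Gk m n := by
  induction h with
  | refl G => exact ⟨by omega, h0⟩
  | @tail p G₁ G₂ G₃ hsteps hstep ih =>
    obtain ⟨hb, rfl⟩ := ih h0
    have hq : 4 ≤ m / 2 ^ p := by
      by_contra h4
      push_neg at h4
      obtain ⟨γ, hγ, -, -⟩ := hstep
      exact no_maxstr_small m p (by omega) γ hγ
    rw [step_iff m p hq] at hstep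
    refine ⟨?_, hstep⟩
    intro k hk
    rcases Nat.lt_or_ge k p with h | h
    · exact hb k h
    · have : k = p := by omega
      subst this
      exact hq

lemma steps_exists (m : ℕ) : ∀ n, (∀ k < n, 4 ≤ m / 2 ^ k) → RePairSteps n (Gk m 0) (Gk m n) := by
  intro n
  induction n with
  | zero => intro _; exact RePairSteps.refl _
  | succ p ih =>
    intro h
    exact RePairSteps.tail (ih (fun k hk => h k (by omega)))
      ((step_iff m p (h p (by omega)) _).mpr rfl)

section MainFacts
variable {m : ℕ} (hm : 4 ≤ m)
include hm

lemma hL2 : 2 ≤ Nat.log 2 m :=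
  (Nat.le_log_iff_pow_le (by norm_num) (by omega)).mpr (by omega)

lemma hqk : ∀ k < Nat.log 2 m - 1, 4 ≤ m / 2 ^ k := by
  intro k hk
  have h1 : 2 ^ (k + 2) ≤ m := by
    rw [← Nat.le_log_iff_pow_le (by norm_num) (by omega)]
    have := hL2 hm
    omega
  rw [Nat.le_div_iff_mul_le (pow_pos (by norm_num) k)]
  calc 4 * 2 ^ k = 2 ^ (k + 2) := by ring
    _ ≤ m := h1
  
lemma hqt_le : m / 2 ^ (Nat.log 2 m - 1) ≤ 3 := by
  set t := Nat.log 2 m - 1 with ht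
  have h1 : ¬ 2 ^ (t + 2) ≤ m := by
    rw [← Nat.le_log_iff_pow_le (by norm_num) (by omega)]
    have := hL2 hm
    omega
  push_neg at h1
  have : m / 2 ^ t < 4 := by
    rw [Nat.div_lt_iff_lt_mul (pow_pos (by norm_num) t)]
    calc m < 2 ^ (t + 2) := h1
      _ = 4 * 2 ^ t := by ring
  omega

lemma hqt_ge : 2 ≤ m / 2 ^ (Nat.log 2 m - 1) := by
  set t := Nat.log 2 m - 1 with ht
  have h1 : 2 ^ (t + 1) ≤ m := by
    have hL := hL2 hm
    have : t + 1 = Nat.log 2 m := by omega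
    rw [this]
    exact Nat.pow_log_le_self 2 (by omega)
  rw [Nat.le_div_iff_mul_le (pow_pos (by norm_num) t)]
  calc 2 * 2 ^ t = 2 ^ (t + 1) := by ring
    _ ≤ m := h1

lemma run_exists : RePairRun (List.replicate m ()) (Gk m (Nat.log 2 m - 1)) := by
  constructor
  · refine ⟨Nat.log 2 m - 1, ?_⟩
    rw [init_eq]
    exact steps_exists m _ (hqk hm)
  · exact no_maxstr_small m _ (hqt_le hm)

lemma run_char {G : Grammar Unit} (hG : RePairRun (List.replicate m ()) G) :
    G = Gk m (Nat.log 2 m - 1) := by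
  obtain ⟨⟨n, hsteps⟩, hnomax⟩ := hG
  obtain ⟨hb, rfl⟩ := steps_char m hsteps (init_eq m)
  have hsm : m / 2 ^ n ≤ 3 := by
    by_contra h4
    push_neg at h4
    exact hnomax _ (maxstr_pair m n (by omega))
  have hn : n = Nat.log 2 m - 1 := by
    rcases Nat.lt_trichotomy n (Nat.log 2 m - 1) with h | h | h
    · have := hqk hm n h
      omega
    · exact h
    · have := hb (Nat.log 2 m - 1) h
      have := hqt_le hm
      omega
  rw [hn]

end MainFacts

lemma count_digits (m : ℕ) : ∀ k, m / 2 ^ k ≠ 0 →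
    (Nat.digits 2 m).count 1 = (tailW m k).length + (Nat.digits 2 (m / 2 ^ k)).count 1 := by
  intro k
  induction k with
  | zero => simp [tailW_zero]
  | succ p ih =>
    intro h
    have hdd : m / 2 ^ (p + 1) = m / 2 ^ p / 2 := by
      rw [pow_succ, Nat.div_div_eq_div_mul]
    have hp : m / 2 ^ p ≠ 0 := by
      intro h0
      rw [hdd, h0] at h
      simp at h
    have hdig : Nat.digits 2 (m / 2 ^ p)
        = m / 2 ^ p % 2 :: Nat.digits 2 (m / 2 ^ p / 2) :=
      Nat.digits_def' (by norm_num) (Nat.pos_of_ne_zero hp)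
    have hlen : (tailW m (p + 1)).length
        = (if m.testBit p then 1 else 0) + (tailW m p).length := by
      rw [tailW_succ, List.length_append]
      congr 1
      split <;> simp
    have hbit : m.testBit p = decide (m / 2 ^ p % 2 = 1) := Nat.testBit_eq_decide_div_mod_eq
    rw [ih hp, hdig, List.count_cons, hlen, hdd]
    by_cases hb : m / 2 ^ p % 2 = 1
    · rw [hb]
      have : m.testBit p = true := by rw [hbit]; simp [hb]
      rw [this]
      simp
      omega
    · have : m.testBit p = false := by rw [hbit]; simpa using hb
      rw [this]
      simp [hb]

lemma size_Gk {m : ℕ} (hm : 4 ≤ m) :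
    gramSize (Gk m (Nat.log 2 m - 1))
      = 2 * (Nat.log 2 m - 1) + (Nat.digits 2 m).count 1 + 1 := by
  set t := Nat.log 2 m - 1 with ht
  have hq2 := hqt_ge hm
  have hq3 := hqt_le hm
  rw [← ht] at hq2 hq3
  have hrules : ((List.range t).map (fun j => ([sym j, sym j] : List (RSym Unit)).length)).sum
      = 2 * t := by
    simp [List.map_const']
    omega
  have hsize : gramSize (Gk m t) = (startW m t).length
      + ((List.range t).map (fun j => ([sym j, sym j] : List (RSym Unit)).length)).sum := by
    simp [gramSize, Gk, List.map_map, Function.comp_def]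
  have hstart : (startW m t).length = m / 2 ^ t + (tailW m t).length := by
    simp [startW]
  have hcd := count_digits m t (by omega)
  have hdig : (Nat.digits 2 (m / 2 ^ t)).count 1 = m / 2 ^ t - 1 := by
    rcases (by omega : m / 2 ^ t = 2 ∨ m / 2 ^ t = 3) with h | h <;> rw [h] <;> simp
  rw [hsize, hrules, hstart]
  omega

lemma Gk_eq_target {m : ℕ} (hm : 4 ≤ m) :
    Gk m (Nat.log 2 m - 1)
      = (([Sum.inl (Nat.log 2 m - 1), Sum.inl (Nat.log 2 m - 1)] ++
            (List.range (Nat.log 2 m - 1 + 1)).reverse.flatMap (fun i =>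
              if Nat.testBit m i then
                [if i = 0 then (Sum.inr () : RSym Unit) else Sum.inl i]
              else [])) ::
          (List.range (Nat.log 2 m - 1)).map (fun j =>
            if j = 0 then ([Sum.inr (), Sum.inr ()] : List (RSym Unit))
            else [Sum.inl j, Sum.inl j])) := by
  set t := Nat.log 2 m - 1 with ht
  have htpos : 1 ≤ t := by
    have := hL2 hm
    omega
  have hsymt : sym t = Sum.inl t := by
    simp [sym]
    omega
  have htail : (List.range (t + 1)).reverse.flatMap (fun i =>
      if Nat.testBit m i then
        [if i = 0 then (Sum.inr () : RSym Unit) else Sum.inl i]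
      else []) = tailW m (t + 1) := by
    unfold tailW sym
    rfl
  have hq2 := hqt_ge hm
  have hq3 := hqt_le hm
  rw [← ht] at hq2 hq3
  have hbit : m.testBit t = decide (m / 2 ^ t % 2 = 1) := Nat.testBit_eq_decide_div_mod_eq
  have hstart : startW m t = [Sum.inl t, Sum.inl t] ++ tailW m (t + 1) := by
    rw [tailW_succ, startW, ← hsymt]
    rcases (by omega : m / 2 ^ t = 2 ∨ m / 2 ^ t = 3) with h | h <;> rw [h]
    · have hbt : m.testBit t = false := by rw [hbit, h]; rfl
      rw [hbt]
      rfl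
    · have hbt : m.testBit t = true := by rw [hbit, h]; rfl
      rw [hbt]
      rfl
  have hrules : (List.range t).map (fun j => ([sym j, sym j] : List (RSym Unit)))
      = (List.range t).map (fun j =>
          if j = 0 then ([Sum.inr (), Sum.inr ()] : List (RSym Unit))
          else [Sum.inl j, Sum.inl j]) := by
    apply List.map_congr_left
    intro j _
    by_cases hj : j = 0 <;> simp [sym, hj]
  rw [Gk, hstart, htail, hrules]

/-- On unary input `a^m` with `m ≥ 4` and `t = ⌊log₂ m⌋ - 1`, RePair outputs exactly the
rules `X 1 → aa`, `X i → X (i-1) X (i-1)` for `2 ≤ i ≤ t`, and the start rule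
`S → X t · X t · f t (b t) ⋯ f 1 (b 1) f 0 (b 0)` where `b j` is the `j`-th binary digit
of `m`, `f 0 1 = a`, `f i 1 = X i` and `f i 0 = ε`; the output size is
`2t + ν(m) + 1 ∈ Θ(log m + ν(m))`, where `ν(m)` is the number of ones in the binary
representation of `m`. -/
theorem repair_stmt_11 (m : ℕ) (hm : 4 ≤ m) :
    (∃ G : Grammar Unit, RePairRun (List.replicate m ()) G) ∧
    (∀ G : Grammar Unit, RePairRun (List.replicate m ()) G →
      G = (([Sum.inl (Nat.log 2 m - 1), Sum.inl (Nat.log 2 m - 1)] ++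
            (List.range (Nat.log 2 m - 1 + 1)).reverse.flatMap (fun i =>
              if Nat.testBit m i then
                [if i = 0 then (Sum.inr () : RSym Unit) else Sum.inl i]
              else [])) ::
          (List.range (Nat.log 2 m - 1)).map (fun j =>
            if j = 0 then ([Sum.inr (), Sum.inr ()] : List (RSym Unit))
            else [Sum.inl j, Sum.inl j]))) ∧
    (∀ G : Grammar Unit, RePairRun (List.replicate m ()) G →
      gramSize G = 2 * (Nat.log 2 m - 1) + (Nat.digits 2 m).count 1 + 1) := by
  refine ⟨⟨Gk m (Nat.log 2 m - 1), run_exists hm⟩, ?_, ?_⟩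
  · intro G hG
    rw [run_char hm hG]
    exact Gk_eq_target hm
  · intro G hG
    rw [run_char hm hG]
    exact size_Gk hm
end

section
/- Let s_k = (∏_{i=1}^{k-1} a^{N_i} b) a^{N_k} where N_1 < N_2 < ⋯ < N_k and 2^{k+i−1} ≤ N_i < 2^{k+i}. During the first k−1 rounds of RePair on input s_k, the chosen maximal string is always a digram over {a, X_1, …, X_{k−2}} and RePair introduces exactly the rules X_1 → aa and X_i → X_{i−1}X_{i−1} for 2 ≤ i ≤ k−1; in particular the letter b, which occurs only k−1 times, never participates in a replaced maximal string in these rounds. -/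
/-- The word `a^{N 1} b a^{N 2} b ... b a^{N k}` over the alphabet `Fin 2`,
with `a = 0` and `b = 1`. -/
def blockWord (N : ℕ → ℕ) (k : ℕ) : List (Fin 2) :=
  ((List.range (k - 1)).flatMap (fun j => List.replicate (N (j + 1)) 0 ++ [1])) ++
    List.replicate (N k) 0

set_option linter.unusedSectionVars false
section Generic
variable {σ : Type} [DecidableEq σ]

lemma countNOAux_nil (γ : List σ) (f : ℕ) : countNOAux γ f [] = 0 := by
  cases f <;> simp [countNOAux]

/-- number of occurrences of a symbol, avoiding BEq instance issues -/
def occ (x : σ) (w : List σ) : ℕ := (w.filter (fun y => y = x)).length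

@[simp] lemma occ_nil (x : σ) : occ x ([] : List σ) = 0 := rfl

@[simp] lemma occ_append (x : σ) (u v : List σ) : occ x (u ++ v) = occ x u + occ x v := by
  simp [occ]

lemma occ_cons (x d : σ) (l : List σ) :
    occ x (d :: l) = (if d = x then 1 else 0) + occ x l := by
  simp [occ, List.filter_cons]
  split <;> simp [Nat.add_comm]

@[simp] lemma occ_replicate (x c : σ) (m : ℕ) :
    occ x (List.replicate m c) = if c = x then m else 0 := by
  induction m with
  | zero => simp
  | succ m ih => rw [List.replicate_succ, occ_cons, ih]; split <;> omega

lemma one_le_occ {x : σ} {w : List σ} (h : x ∈ w) : 1 ≤ occ x w := by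
  induction w with
  | nil => simp at h
  | cons d l ih =>
    rw [occ_cons]
    rcases List.mem_cons.mp h with h | h
    · simp [h]
    · have := ih h; split <;> omega

lemma occ_eq_zero {x : σ} {w : List σ} (h : x ∉ w) : occ x w = 0 := by
  induction w with
  | nil => simp
  | cons d l ih =>
    rw [occ_cons]
    have hd : ¬ (d = x) := fun hh => h (hh ▸ List.mem_cons_self (a := d) (l := l))
    rw [if_neg hd, ih (fun hh => h (List.mem_cons_of_mem d hh))]

lemma countNOAux_mul_le (γ : List σ) (x : σ) (hx : x ∈ γ) :
    ∀ f w, countNOAux γ f w * occ x γ ≤ occ x w := by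
  intro f
  induction f with
  | zero => intro w; simp [countNOAux]
  | succ f ih =>
    intro w
    rcases w with _ | ⟨s, tl⟩
    · simp [countNOAux]
    · rw [countNOAux]
      simp only [List.cons_ne_nil, if_false, reduceIte]
      by_cases hp : γ <+: (s :: tl)
      · rw [if_pos hp]
        obtain ⟨t, ht⟩ := hp
        have hdrop : (s :: tl).drop γ.length = t := by rw [← ht]; simp
        rw [hdrop, ← ht, add_mul, one_mul, occ_append]
        exact Nat.add_le_add le_rfl (ih t)
      · rw [if_neg hp]
        calc countNOAux γ f (s :: tl).tail * occ x γ ≤ occ x (s :: tl).tail := ih _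
          _ ≤ occ x (s :: tl) := by rw [List.tail_cons, occ_cons]; omega

/-- frequency times multiplicity bounded by total symbol count -/
lemma freq_mul_le {α : Type} [DecidableEq α] (G : Grammar α) (δ : List (RSym α))
    (x : RSym α) (hx : x ∈ δ) :
    freq G δ * occ x δ ≤ (G.map (occ x)).sum := by
  induction G with
  | nil => simp [freq]
  | cons w G ih =>
    simp only [freq, List.map_cons, List.sum_cons, add_mul] at *
    exact Nat.add_le_add (countNOAux_mul_le δ x hx _ _) ih

/-- structural version of countNO for digrams -/
def cnt (c : σ) : List σ → ℕ
  | [] => 0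
  | [_] => 0
  | x :: y :: w => if x = c ∧ y = c then 1 + cnt c w else cnt c (y :: w)

/-- structural version of replaceNO for digrams -/
def rpl (c X : σ) : List σ → List σ
  | [] => []
  | [x] => [x]
  | x :: y :: w => if x = c ∧ y = c then X :: rpl c X w else x :: rpl c X (y :: w)

lemma prefix_pair (c x y : σ) (t : List σ) :
    [c, c] <+: (x :: y :: t) ↔ (x = c ∧ y = c) := by
  constructor
  · intro h
    obtain ⟨u, hu⟩ := h
    simp at hu
    exact ⟨hu.1.symm, hu.2.1.symm⟩
  · rintro ⟨rfl, rfl⟩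
    exact ⟨t, rfl⟩

lemma countNOAux_eq_cnt (c : σ) : ∀ f w, w.length ≤ f → countNOAux [c, c] f w = cnt c w := by
  intro f
  induction f with
  | zero => intro w hw; rw [List.length_eq_zero_iff.mp (Nat.le_zero.mp hw)]; simp [countNOAux, cnt]
  | succ f ih =>
    intro w hw
    rcases w with _ | ⟨x, _ | ⟨y, t⟩⟩
    · simp [countNOAux, cnt]
    · rw [countNOAux]
      have : ¬ ([c,c] <+: [x]) := by
        intro h; have := h.length_le; simp at this
      simp [this, cnt, countNOAux_nil]
    · rw [countNOAux]
      simp only [List.cons_ne_nil, reduceIte]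
      simp only [List.length_cons] at hw
      by_cases hp : x = c ∧ y = c
      · rw [if_pos ((prefix_pair c x y t).mpr hp)]
        rw [cnt, if_pos hp]
        congr 1
        exact ih _ (by simpa using by omega)
      · rw [if_neg (fun h => hp ((prefix_pair c x y t).mp h))]
        rw [cnt, if_neg hp]
        exact ih _ (by simp; omega)

lemma countNO_eq_cnt (c : σ) (w : List σ) : countNO [c, c] w = cnt c w :=
  countNOAux_eq_cnt c w.length w le_rfl

lemma replaceNOAux_eq_rpl (c X : σ) :
    ∀ f w, w.length ≤ f → replaceNOAux [c, c] X f w = rpl c X w := by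
  intro f
  induction f with
  | zero => intro w hw; rw [List.length_eq_zero_iff.mp (Nat.le_zero.mp hw)]; simp [replaceNOAux, rpl]
  | succ f ih =>
    intro w hw
    rcases w with _ | ⟨x, _ | ⟨y, t⟩⟩
    · simp [replaceNOAux, rpl]
    · rw [replaceNOAux]
      have : ¬ ([c,c] <+: [x]) := by
        intro h; have := h.length_le; simp at this
      rw [if_neg this]
      rw [rpl]
      congr 1
      cases f <;> simp [replaceNOAux]
    · rw [replaceNOAux]
      simp only [List.length_cons] at hw
      by_cases hp : x = c ∧ y = c
      · rw [if_pos ((prefix_pair c x y t).mpr hp)]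
        rw [rpl, if_pos hp]
        congr 1
        exact ih _ (by simp; omega)
      · rw [if_neg (fun h => hp ((prefix_pair c x y t).mp h))]
        rw [rpl, if_neg hp]
        congr 1
        exact ih _ (by simp; omega)

lemma replaceNO_eq_rpl (c X : σ) (w : List σ) : replaceNO [c, c] X w = rpl c X w :=
  replaceNOAux_eq_rpl c X w.length w le_rfl

-- structure lemmas for cnt
lemma cnt_cons_of_ne {c d : σ} (h : d ≠ c) (l : List σ) : cnt c (d :: l) = cnt c l := by
  rcases l with _ | ⟨y, t⟩ <;> simp [cnt, h]

lemma cnt_cons_c {c : σ} {l : List σ} (h : l.head? ≠ some c) : cnt c (c :: l) = cnt c l := by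
  rcases l with _ | ⟨y, t⟩
  · simp [cnt]
  · have : y ≠ c := by simpa using h
    simp [cnt, this]

lemma cnt_replicate {c : σ} {l : List σ} (h : l.head? ≠ some c) :
    ∀ m, cnt c (List.replicate m c ++ l) = m / 2 + cnt c l := by
  intro m
  induction m using Nat.strong_induction_on with
  | _ m ih =>
    match m with
    | 0 => simp
    | 1 => simpa using cnt_cons_c h
    | m + 2 =>
      have : List.replicate (m+2) c ++ l = c :: c :: (List.replicate m c ++ l) := by
        simp [List.replicate_succ]
      rw [this, cnt, if_pos ⟨rfl, rfl⟩, ih m (by omega)]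
      omega

lemma cnt_append_of_not_mem {c : σ} {u : List σ} (h : c ∉ u) (v : List σ) :
    cnt c (u ++ v) = cnt c v := by
  induction u with
  | nil => simp
  | cons d u ih =>
    have hd : d ≠ c := fun hh => h (hh ▸ List.mem_cons_self (a := d) (l := u))
    rw [List.cons_append, cnt_cons_of_ne hd, ih (fun hh => h (List.mem_cons_of_mem d hh))]

lemma cnt_eq_zero {c : σ} {w : List σ} (h : c ∉ w) : cnt c w = 0 := by
  have := cnt_append_of_not_mem h ([] : List σ)
  simpa [cnt] using this

lemma head?_ne_of_not_mem {c : σ} {l : List σ} (h : c ∉ l) : l.head? ≠ some c := by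
  rcases l with _ | ⟨y, t⟩
  · simp
  · simp at h ⊢
    exact fun hh => h.1 hh.symm

-- structure lemmas for rpl
lemma rpl_cons_of_ne {c X d : σ} (h : d ≠ c) (l : List σ) :
    rpl c X (d :: l) = d :: rpl c X l := by
  rcases l with _ | ⟨y, t⟩ <;> simp [rpl, h]

lemma rpl_cons_c {c X : σ} {l : List σ} (h : l.head? ≠ some c) :
    rpl c X (c :: l) = c :: rpl c X l := by
  rcases l with _ | ⟨y, t⟩
  · simp [rpl]
  · have : y ≠ c := by simpa using h
    simp [rpl, this]

lemma rpl_replicate {c X : σ} {l : List σ} (h : l.head? ≠ some c) :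
    ∀ m, rpl c X (List.replicate m c ++ l) =
      List.replicate (m / 2) X ++ List.replicate (m % 2) c ++ rpl c X l := by
  intro m
  induction m using Nat.strong_induction_on with
  | _ m ih =>
    match m with
    | 0 => simp
    | 1 => simpa using rpl_cons_c h
    | m + 2 =>
      have h2 : List.replicate (m+2) c ++ l = c :: c :: (List.replicate m c ++ l) := by
        simp [List.replicate_succ]
      rw [h2, rpl, if_pos ⟨rfl, rfl⟩, ih m (by omega)]
      have : (m+2)/2 = m/2 + 1 := by omega
      rw [this]
      have : (m+2) % 2 = m % 2 := by omega
      rw [this, List.replicate_succ]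
      simp

lemma rpl_append_of_not_mem {c X : σ} {u : List σ} (h : c ∉ u) (v : List σ) :
    rpl c X (u ++ v) = u ++ rpl c X v := by
  induction u with
  | nil => simp
  | cons d u ih =>
    have hd : d ≠ c := fun hh => h (hh ▸ List.mem_cons_self (a := d) (l := u))
    rw [List.cons_append, rpl_cons_of_ne hd, ih (fun hh => h (List.mem_cons_of_mem d hh))]
    simp

lemma rpl_of_not_mem {c X : σ} {w : List σ} (h : c ∉ w) : rpl c X w = w := by
  have := rpl_append_of_not_mem (X := X) h ([] : List σ)
  simpa [rpl] using this

lemma occ_flatMap {α β : Type} [DecidableEq β] (x : β) (g : α → List β) (L : List α) :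
    occ x (L.flatMap g) = (L.map (fun t => occ x (g t))).sum := by
  induction L with
  | nil => simp
  | cons a L ih => simp [List.flatMap_cons, ih]

end Generic
set_option linter.unusedVariables false

/-- the symbol representing `2^t`-blocks: `a` for `t = 0`, `X t` otherwise -/
def symb (t : ℕ) : RSym (Fin 2) := if t = 0 then Sum.inr 0 else Sum.inl t

lemma symb_inj : Function.Injective symb := by
  intro s t h
  unfold symb at h
  split at h <;> split at h <;> simp_all

lemma symb_ne_b (t : ℕ) : symb t ≠ Sum.inr 1 := by
  unfold symb; split <;> simp

lemma symb_ne_inl_zero (t : ℕ) : symb t ≠ Sum.inl 0 := by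
  unfold symb; split <;> simp_all

/-- lower-order digits of the representation of `a^n` after `r` rounds -/
def dig (r n : ℕ) : List (RSym (Fin 2)) :=
  (List.range r).reverse.flatMap fun t => List.replicate (n / 2^t % 2) (symb t)

/-- the representation of `a^n` after `r` rounds -/
def rep (r n : ℕ) : List (RSym (Fin 2)) :=
  List.replicate (n / 2^r) (symb r) ++ dig r n

lemma symb_not_mem_dig {r n : ℕ} : symb r ∉ dig r n := by
  intro h
  rw [dig, List.mem_flatMap] at h
  obtain ⟨t, ht, hmem⟩ := h
  have := List.eq_of_mem_replicate hmem
  have := symb_inj this.symm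
  simp at ht
  omega

lemma not_mem_dig_of_ge {r n s : ℕ} (h : r ≤ s) : symb s ∉ dig r n := by
  intro hmem
  rw [dig, List.mem_flatMap] at hmem
  obtain ⟨t, ht, hm⟩ := hmem
  have := symb_inj (List.eq_of_mem_replicate hm).symm
  simp at ht
  omega

lemma b_not_mem_dig {r n : ℕ} : (Sum.inr 1 : RSym (Fin 2)) ∉ dig r n := by
  intro h
  rw [dig, List.mem_flatMap] at h
  obtain ⟨t, ht, hmem⟩ := h
  exact symb_ne_b t (List.eq_of_mem_replicate hmem).symm

lemma dig_succ (r n : ℕ) :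
    dig (r+1) n = List.replicate (n / 2^r % 2) (symb r) ++ dig r n := by
  rw [dig, dig, List.range_succ, List.reverse_append]
  simp

/-- the main word after `r` rounds -/
def mainW (N : ℕ → ℕ) (k r : ℕ) : List (RSym (Fin 2)) :=
  ((List.range (k-1)).flatMap fun j => rep r (N (j+1)) ++ [Sum.inr 1]) ++ rep r (N k)

def tailRule (j : ℕ) : List (RSym (Fin 2)) :=
  if j = 0 then [Sum.inr 0, Sum.inr 0] else [Sum.inl j, Sum.inl j]

lemma tailRule_eq (j : ℕ) : tailRule j = [symb j, symb j] := by
  unfold tailRule symb; split <;> rfl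

/-- the grammar after `r` rounds -/
def Gr (N : ℕ → ℕ) (k r : ℕ) : Grammar (Fin 2) :=
  mainW N k r :: (List.range r).map tailRule

lemma rep_zero (n : ℕ) : rep 0 n = List.replicate n (Sum.inr 0) := by
  rw [rep]; simp [dig, symb]

lemma Gr_zero (N : ℕ → ℕ) (k : ℕ) : Gr N k 0 = RePairInit (blockWord N k) := by
  rw [Gr, RePairInit, blockWord, mainW]
  simp only [List.range_zero, List.map_nil, List.map_append, List.map_flatMap]
  congr 1
  congr 1
  · refine List.flatMap_congr ?_
    intro j hj
    simp [rep_zero, Function.comp]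
  · simp [rep_zero]
@[simp] lemma dig_zero (n : ℕ) : dig 0 n = [] := by simp [dig]

lemma head?_ne_append_cons {σ : Type} [DecidableEq σ] {c : σ} {u : List σ} {d : σ}
    (hu : c ∉ u) (hd : d ≠ c) (v : List σ) : (u ++ d :: v).head? ≠ some c := by
  rcases u with _ | ⟨e, u⟩
  · simpa using hd
  · have : e ≠ c := fun h => hu (h ▸ List.mem_cons_self (a := e) (l := u))
    simpa using this

lemma div_div_pow (n r : ℕ) : n / 2^r / 2 = n / 2^(r+1) := by
  rw [Nat.div_div_eq_div_mul, pow_succ]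

lemma pow_le_div {a b n : ℕ} (hb : b ≤ a) (h : 2^a ≤ n) : 2^(a-b) ≤ n / 2^b := by
  rw [Nat.le_div_iff_mul_le (Nat.two_pow_pos b), ← pow_add]
  have : a - b + b = a := by omega
  rw [this]; exact h

lemma cnt_mainW_aux (N : ℕ → ℕ) (r nk : ℕ) :
    ∀ L : List ℕ,
      cnt (symb r) ((L.flatMap fun j => rep r (N (j+1)) ++ [Sum.inr 1]) ++ rep r nk) =
      (L.map fun j => N (j+1) / 2^(r+1)).sum + nk / 2^(r+1) := by
  intro L
  induction L with
  | nil =>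
    simp only [List.flatMap_nil, List.nil_append, List.map_nil, List.sum_nil, Nat.zero_add]
    rw [rep, cnt_replicate (head?_ne_of_not_mem symb_not_mem_dig),
      cnt_eq_zero symb_not_mem_dig, div_div_pow]
    omega
  | cons j L ih =>
    rw [List.flatMap_cons, rep]
    have hhd : ((dig r (N (j+1)) ++ (Sum.inr 1 : RSym (Fin 2)) ::
        ((L.flatMap fun j => rep r (N (j+1)) ++ [Sum.inr 1]) ++ rep r nk))).head? ≠
        some (symb r) :=
      head?_ne_append_cons symb_not_mem_dig (Ne.symm (symb_ne_b r)) _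
    simp only [List.append_assoc, List.cons_append, List.nil_append] at *
    rw [cnt_replicate hhd, cnt_append_of_not_mem symb_not_mem_dig,
      cnt_cons_of_ne (Ne.symm (symb_ne_b r)), ih, div_div_pow]
    simp only [List.map_cons, List.sum_cons]
    omega

lemma cnt_mainW (N : ℕ → ℕ) (k r : ℕ) :
    cnt (symb r) (mainW N k r) =
      ((List.range (k-1)).map fun j => N (j+1) / 2^(r+1)).sum + N k / 2^(r+1) :=
  cnt_mainW_aux N r (N k) _

lemma rpl_mainW_aux (N : ℕ → ℕ) (r nk : ℕ) :
    ∀ L : List ℕ,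
      rpl (symb r) (symb (r+1))
        ((L.flatMap fun j => rep r (N (j+1)) ++ [Sum.inr 1]) ++ rep r nk) =
      (L.flatMap fun j => rep (r+1) (N (j+1)) ++ [Sum.inr 1]) ++ rep (r+1) nk := by
  intro L
  induction L with
  | nil =>
    simp only [List.flatMap_nil, List.nil_append]
    rw [rep, rpl_replicate (head?_ne_of_not_mem symb_not_mem_dig),
      rpl_of_not_mem symb_not_mem_dig, rep, dig_succ, div_div_pow]
    have : nk / 2^r % 2 = nk / 2^r % 2 := rfl
    simp [List.append_assoc]
  | cons j L ih =>
    rw [List.flatMap_cons, List.flatMap_cons, rep]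
    have hhd : ((dig r (N (j+1)) ++ (Sum.inr 1 : RSym (Fin 2)) ::
        ((L.flatMap fun j => rep r (N (j+1)) ++ [Sum.inr 1]) ++ rep r nk))).head? ≠
        some (symb r) :=
      head?_ne_append_cons symb_not_mem_dig (Ne.symm (symb_ne_b r)) _
    simp only [List.append_assoc, List.cons_append, List.nil_append] at *
    rw [rpl_replicate hhd, rpl_append_of_not_mem symb_not_mem_dig,
      rpl_cons_of_ne (Ne.symm (symb_ne_b r)), ih, div_div_pow]
    simp [rep, dig_succ, List.append_assoc]

lemma rpl_mainW (N : ℕ → ℕ) (k r : ℕ) :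
    rpl (symb r) (symb (r+1)) (mainW N k r) = mainW N k (r+1) :=
  rpl_mainW_aux N r (N k) _

-- occurrence computations
lemma occ_c_rep (r n : ℕ) : occ (symb r) (rep r n) = n / 2^r := by
  rw [rep, occ_append, occ_replicate, occ_eq_zero symb_not_mem_dig, if_pos rfl]
  omega

lemma occ_c_mainW (N : ℕ → ℕ) (k r : ℕ) :
    occ (symb r) (mainW N k r) =
      ((List.range (k-1)).map fun j => N (j+1) / 2^r).sum + N k / 2^r := by
  rw [mainW, occ_append, occ_flatMap, occ_c_rep]
  congr 1
  apply congrArg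
  apply List.map_congr_left
  intro j hj
  rw [occ_append, occ_c_rep, occ_cons, occ_nil, if_neg (Ne.symm (symb_ne_b r))]
  omega

lemma occ_dig_le_one (x : RSym (Fin 2)) (n : ℕ) : ∀ r, occ x (dig r n) ≤ 1 := by
  intro r
  induction r with
  | zero => simp
  | succ r ih =>
    rw [dig_succ, occ_append, occ_replicate]
    by_cases h : symb r = x
    · rw [if_pos h, ← h, occ_eq_zero symb_not_mem_dig]
      have : n / 2^r % 2 ≤ 1 := by omega
      omega
    · rw [if_neg h]; omega

lemma occ_other_rep {x : RSym (Fin 2)} {r : ℕ} (hx : x ≠ symb r) (n : ℕ) :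
    occ x (rep r n) ≤ 1 := by
  rw [rep, occ_append, occ_replicate, if_neg (fun h => hx h.symm)]
  simpa using occ_dig_le_one x n r

lemma occ_other_mainW {x : RSym (Fin 2)} {r : ℕ} (hx : x ≠ symb r) (N : ℕ → ℕ) {k : ℕ}
    (hk : 1 ≤ k) : occ x (mainW N k r) ≤ k := by
  rw [mainW, occ_append, occ_flatMap]
  by_cases hb : x = (Sum.inr 1 : RSym (Fin 2))
  · -- x = b : occurs once per separator, none in reps
    subst hb
    have hrep : ∀ n, occ (Sum.inr 1 : RSym (Fin 2)) (rep r n) = 0 := by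
      intro n
      rw [rep, occ_append, occ_replicate, if_neg (symb_ne_b r),
        occ_eq_zero b_not_mem_dig]
    have hsum : ((List.range (k-1)).map fun j =>
        occ (Sum.inr 1 : RSym (Fin 2)) (rep r (N (j+1)) ++ [Sum.inr 1])).sum ≤ k - 1 := by
      have : ∀ j ∈ List.range (k-1),
          occ (Sum.inr 1 : RSym (Fin 2)) (rep r (N (j+1)) ++ [Sum.inr 1]) ≤ 1 := by
        intro j hj
        rw [occ_append, hrep, occ_cons, occ_nil]
        simp
      calc ((List.range (k-1)).map fun j =>
          occ (Sum.inr 1 : RSym (Fin 2)) (rep r (N (j+1)) ++ [Sum.inr 1])).sum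
          ≤ ((List.range (k-1)).map fun _ => 1).sum := by
            apply List.sum_le_sum
            intro j hj
            simp only [List.mem_range] at hj
            exact this j (by simpa using hj)
        _ = k - 1 := by simp [List.map_const]
    rw [hrep]
    omega
  · have hsum : ((List.range (k-1)).map fun j =>
        occ x (rep r (N (j+1)) ++ [Sum.inr 1])).sum ≤ k - 1 := by
      calc ((List.range (k-1)).map fun j => occ x (rep r (N (j+1)) ++ [Sum.inr 1])).sum
          ≤ ((List.range (k-1)).map fun _ => 1).sum := by
            apply List.sum_le_sum
            intro j hj
            rw [occ_append, occ_cons, occ_nil, if_neg (fun h => hb h.symm)]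
            simpa using occ_other_rep hx (N (j+1))
        _ = k - 1 := by simp [List.map_const]
    have := occ_other_rep hx (N k)
    omega
lemma occ_tailRule (x : RSym (Fin 2)) (j : ℕ) :
    occ x (tailRule j) = if symb j = x then 2 else 0 := by
  rw [tailRule_eq, occ_cons, occ_cons, occ_nil]
  split <;> omega

lemma not_mem_tailRule {r j : ℕ} (h : j ≠ r) : symb r ∉ tailRule j := by
  rw [tailRule_eq]
  intro hm
  rcases List.mem_cons.mp hm with hh | hh
  · exact h (symb_inj hh).symm
  · simp at hh
    exact h (symb_inj hh).symm

lemma occ_rules_le (x : RSym (Fin 2)) :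
    ∀ L : List ℕ, L.Nodup → (((L.map tailRule).map (occ x)).sum ≤ 2) := by
  intro L
  induction L with
  | nil => simp
  | cons j L ih =>
    intro hnd
    rw [List.map_cons, List.map_cons, List.sum_cons, occ_tailRule]
    have hnd' := (List.nodup_cons.mp hnd).2
    have hj := (List.nodup_cons.mp hnd).1
    by_cases h : symb j = x
    · rw [if_pos h]
      have hz : ((L.map tailRule).map (occ x)).sum = 0 := by
        apply List.sum_eq_zero
        intro n hn
        simp only [List.map_map, List.mem_map] at hn
        obtain ⟨t, ht, rfl⟩ := hn
        simp only [Function.comp]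
        rw [occ_tailRule, if_neg]
        intro hh
        exact hj (symb_inj (hh.trans h.symm) ▸ ht)
      omega
    · rw [if_neg h]
      simpa using ih hnd'

/-- total occurrences of the current run symbol in the grammar -/
lemma occ_c_Gr (N : ℕ → ℕ) (k r : ℕ) :
    ((Gr N k r).map (occ (symb r))).sum =
      ((List.range (k-1)).map fun j => N (j+1) / 2^r).sum + N k / 2^r := by
  rw [Gr, List.map_cons, List.sum_cons, occ_c_mainW]
  have hz : (((List.range r).map tailRule).map (occ (symb r))).sum = 0 := by
    apply List.sum_eq_zero
    intro n hn
    simp only [List.map_map, List.mem_map] at hn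
    obtain ⟨t, ht, rfl⟩ := hn
    simp only [Function.comp]
    exact occ_eq_zero (not_mem_tailRule (by simp at ht; omega))
  omega

lemma occ_other_Gr {x : RSym (Fin 2)} {r : ℕ} (hx : x ≠ symb r) (N : ℕ → ℕ) {k : ℕ}
    (hk : 1 ≤ k) : ((Gr N k r).map (occ x)).sum ≤ k + 2 := by
  rw [Gr, List.map_cons, List.sum_cons]
  have h1 := occ_other_mainW hx N hk
  have h2 := occ_rules_le x (List.range r) (List.nodup_range (n := r))
  omega

lemma freq_Gr_cc (N : ℕ → ℕ) (k r : ℕ) :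
    freq (Gr N k r) [symb r, symb r] =
      ((List.range (k-1)).map fun j => N (j+1) / 2^(r+1)).sum + N k / 2^(r+1) := by
  rw [freq, Gr, List.map_cons, List.sum_cons, countNO_eq_cnt, cnt_mainW]
  have hz : (((List.range r).map tailRule).map (countNO [symb r, symb r])).sum = 0 := by
    apply List.sum_eq_zero
    intro n hn
    simp only [List.map_map, List.mem_map] at hn
    obtain ⟨t, ht, rfl⟩ := hn
    simp only [Function.comp]
    rw [countNO_eq_cnt]
    exact cnt_eq_zero (not_mem_tailRule (by simp at ht; omega))
  omega

lemma sum_ge_const {L : List ℕ} {f : ℕ → ℕ} {a : ℕ} (h : ∀ x ∈ L, a ≤ f x) :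
    L.length * a ≤ (L.map f).sum := by
  induction L with
  | nil => simp
  | cons j L ih =>
    rw [List.map_cons, List.sum_cons, List.length_cons]
    have h1 := h j (List.mem_cons_self (a := j) (l := L))
    have h2 := ih (fun x hx => h x (List.mem_cons_of_mem j hx))
    rw [Nat.succ_mul]
    omega

lemma sum_le_two_mul_add {L : List ℕ} {f g : ℕ → ℕ} (h : ∀ x ∈ L, f x ≤ 2 * g x + 1) :
    (L.map f).sum ≤ 2 * (L.map g).sum + L.length := by
  induction L with
  | nil => simp
  | cons j L ih =>
    rw [List.map_cons, List.map_cons, List.sum_cons, List.sum_cons, List.length_cons]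
    have h1 := h j (List.mem_cons_self (a := j) (l := L))
    have h2 := ih (fun x hx => h x (List.mem_cons_of_mem j hx))
    omega
lemma occ_all {σ : Type} [DecidableEq σ] {c : σ} {δ : List σ} (h : ∀ x ∈ δ, x = c) :
    occ c δ = δ.length := by
  induction δ with
  | nil => simp
  | cons d l ih =>
    rw [occ_cons, if_pos (h d (List.mem_cons_self (a := d) (l := l))), List.length_cons,
      ih (fun x hx => h x (List.mem_cons_of_mem d hx))]
    omega

open Classical in
lemma step_lemma (k : ℕ) (hk : 2 ≤ k) (N : ℕ → ℕ)
    (hbound : ∀ i, 1 ≤ i → i ≤ k → 2 ^ (k + i - 1) ≤ N i ∧ N i < 2 ^ (k + i))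
    (r : ℕ) (hr : r ≤ k - 2) {G' : Grammar (Fin 2)}
    (h : RePairStep (Gr N k r) G') : G' = Gr N k (r+1) := by
  have hk1 : 1 ≤ k := by omega
  set c := symb r with hc
  set F := ((List.range (k-1)).map fun j => N (j+1) / 2^(r+1)).sum + N k / 2^(r+1) with hF
  have hfreq : freq (Gr N k r) [c, c] = F := freq_Gr_cc N k r
  -- lower bounds
  have hterm2 : ∀ j ∈ List.range (k-1), 2 ≤ N (j+1) / 2^(r+1) := by
    intro j hj
    simp only [List.mem_range] at hj
    have hb := (hbound (j+1) (by omega) (by omega)).1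
    have : k + (j+1) - 1 = k + j := by omega
    rw [this] at hb
    have h2 : 2^(k + j - (r+1)) ≤ N (j+1) / 2^(r+1) := pow_le_div (by omega) hb
    calc (2:ℕ) = 2^1 := rfl
      _ ≤ 2^(k + j - (r+1)) := Nat.pow_le_pow_right (by norm_num) (by omega)
      _ ≤ _ := h2
  have hlast : 2^k ≤ N k / 2^(r+1) := by
    have hb := (hbound k (by omega) le_rfl).1
    have h2 : 2^(k + k - 1 - (r+1)) ≤ N k / 2^(r+1) := pow_le_div (by omega) hb
    calc (2:ℕ)^k ≤ 2^(k + k - 1 - (r+1)) := Nat.pow_le_pow_right (by norm_num) (by omega)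
      _ ≤ _ := h2
  have hFlow : 2*(k-1) + 2^k ≤ F := by
    have hs := sum_ge_const hterm2
    rw [List.length_range] at hs
    rw [hF]
    omega
  have hk2 : k < 2^k := Nat.lt_two_pow_self (n := k)
  have hkF : k + 2 < F := by omega
  -- upper bound on total occurrences of c
  have hC : ((Gr N k r).map (occ c)).sum ≤ 2 * F + k := by
    rw [hc, occ_c_Gr]
    have hpt : ∀ j ∈ List.range (k-1), N (j+1) / 2^r ≤ 2 * (N (j+1) / 2^(r+1)) + 1 := by
      intro j _
      have := div_div_pow (N (j+1)) r
      omega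
    have hs := sum_le_two_mul_add hpt
    rw [List.length_range] at hs
    have hlast' : N k / 2^r ≤ 2 * (N k / 2^(r+1)) + 1 := by
      have := div_div_pow (N k) r
      omega
    rw [hF]
    omega
  -- KEY: any candidate other than [c,c] has strictly smaller frequency
  have hkey : ∀ δ : List (RSym (Fin 2)), 2 ≤ δ.length → δ ≠ [c, c] →
      freq (Gr N k r) δ < F := by
    intro δ hlen hne
    rcases Classical.em (∀ x ∈ δ, x = c) with hall | hall
    · have h3 : 3 ≤ δ.length := by
        rcases δ with _ | ⟨x, _ | ⟨y, _ | ⟨z, t⟩⟩⟩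
        · simp at hlen
        · simp at hlen
        · exfalso
          apply hne
          rw [hall x (by simp), hall y (by simp)]
        · simp
      have hcm : c ∈ δ := by
        rcases δ with _ | ⟨x, t⟩
        · simp at hlen
        · rw [← hall x (by simp)]; simp
      have hmul := freq_mul_le (Gr N k r) δ c hcm
      have hocc : occ c δ = δ.length := occ_all hall
      by_contra hge
      push_neg at hge
      have h1 : F * 3 ≤ freq (Gr N k r) δ * 3 := Nat.mul_le_mul_right 3 hge
      have h2 : freq (Gr N k r) δ * 3 ≤ freq (Gr N k r) δ * occ c δ := by
        apply Nat.mul_le_mul_left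
        omega
      omega
    · push_neg at hall
      obtain ⟨x, hxm, hxne⟩ := hall
      have hmul := freq_mul_le (Gr N k r) δ x hxm
      have h1 : freq (Gr N k r) δ * 1 ≤ freq (Gr N k r) δ * occ x δ := by
        apply Nat.mul_le_mul_left
        exact one_le_occ hxm
      have h2 := occ_other_Gr hxne N hk1
      omega
  -- [c,c] is a maximal string
  have hmax0 : IsMaxStr (Gr N k r) [c, c] := by
    refine ⟨by simp, ?_, ?_⟩
    · rw [hfreq]; omega
    · intro δ hδ
      simp only [List.length_cons, List.length_nil] at hδ
      rw [hfreq]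
      apply hkey δ (by omega)
      intro hh
      rw [hh] at hδ
      simp at hδ
  -- the chosen string must be [c,c]
  obtain ⟨γ, hγmax, hγbest, hG'⟩ := h
  have hγeq : γ = [c, c] := by
    by_contra hne
    have hlt := hkey γ hγmax.1 hne
    have hle := hγbest [c, c] hmax0
    rw [hfreq] at hle
    omega
  subst hγeq
  -- compute the new grammar
  have hlen : (Gr N k r).length = r + 1 := by simp [Gr]
  rw [hG', hlen]
  have hX : (Sum.inl (r+1) : RSym (Fin 2)) = symb (r+1) := by simp [symb]
  have hmain : replaceNO [c, c] (Sum.inl (r+1)) (mainW N k r) = mainW N k (r+1) := by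
    rw [replaceNO_eq_rpl, hX, hc, rpl_mainW]
  have hrules : ((List.range r).map tailRule).map
      (fun w => replaceNO [c, c] (Sum.inl (r+1)) w) = (List.range r).map tailRule := by
    rw [List.map_map]
    apply List.map_congr_left
    intro j hj
    simp only [Function.comp]
    rw [replaceNO_eq_rpl]
    exact rpl_of_not_mem (not_mem_tailRule (by simp at hj; omega))
  rw [Gr, List.map_cons, hmain, hrules, Gr, List.cons_append]
  congr 1
  rw [List.range_succ, List.map_append]
  congr 1
  simp [tailRule_eq, hc]
/-- For `s_k = a^{N 1} b ⋯ b a^{N k}` with `N 1 < ⋯ < N k` and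
`2^{k+i-1} ≤ N i < 2^{k+i}`, during the first `k - 1` rounds RePair introduces exactly
the rules `X 1 → aa` and `X i → X (i-1) X (i-1)` (`2 ≤ i ≤ k - 1`); in particular the
letter `b` never participates in a replaced maximal string during these rounds. -/
theorem repair_stmt_12 (k : ℕ) (hk : 2 ≤ k) (N : ℕ → ℕ)
    (hmono : ∀ i, 1 ≤ i → i < k → N i < N (i + 1))
    (hbound : ∀ i, 1 ≤ i → i ≤ k → 2 ^ (k + i - 1) ≤ N i ∧ N i < 2 ^ (k + i)) :
    ∀ r, r ≤ k - 1 → ∀ G : Grammar (Fin 2),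
      RePairSteps r (RePairInit (blockWord N k)) G →
      G.length = r + 1 ∧
      G.tail = (List.range r).map (fun j =>
        if j = 0 then ([Sum.inr 0, Sum.inr 0] : List (RSym (Fin 2)))
        else [Sum.inl j, Sum.inl j]) := by
  have main : ∀ r (G₀ G : Grammar (Fin 2)), RePairSteps r G₀ G →
      G₀ = RePairInit (blockWord N k) → r ≤ k - 1 → G = Gr N k r := by
    intro r G₀ G hsteps
    induction hsteps with
    | refl G => intro h0 _; rw [h0]; exact (Gr_zero N k).symm
    | @tail n G₁ G₂ G₃ hsteps hstep ih =>
      intro h0 hn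
      have h2 := ih h0 (by omega)
      rw [h2] at hstep
      exact step_lemma k hk N hbound n (by omega) hstep
  intro r hr G hsteps
  rw [main r _ G hsteps rfl hr]
  refine ⟨by simp [Gr], ?_⟩
  rfl
end

section
/- If N_1 ≥ 2 and N_{i+1} ∈ {2N_i, 2N_i + 1} for 1 ≤ i ≤ k−1, then g((∏_{i=1}^{k-1} a^{N_i} b) a^{N_k}) ≤ g(a^{N_1}) + 3(k−1) + (2k+1) ∈ O(k + log N_1). -/
lemma SLP.val_def {α : Type} (G : SLP α) (i : Fin G.n) :
    G.val i = ((G.rhs i).map (Sum.elim G.val (fun a => [a]))).flatten := by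
  rw [SLP.val]
  congr 1
  rw [← List.attach_map_val (l := G.rhs i) (f := Sum.elim G.val (fun a => [a]))]
  apply List.map_congr_left
  intro s _
  rcases h : s.1 with j | a <;> simp [h]

lemma gsize_le_of {α : Type} {w : List α} (G : SLP α) (h : G.produces w) : gsize w ≤ G.size :=
  Nat.sInf_le ⟨G, h, rfl⟩

lemma val_two {α : Type} (G : SLP α) (b c : Fin G.n) (hb : G.rhs b = [.inl c, .inl c])
    (x : ℕ) (a : α) (hc : G.val c = List.replicate x a) :
    G.val b = List.replicate (2 * x) a := by
  rw [SLP.val_def, hb, two_mul, List.replicate_add]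
  simp [hc]

lemma val_two1 {α : Type} (G : SLP α) (b c : Fin G.n) (a : α)
    (hb : G.rhs b = [.inl c, .inl c, .inr a])
    (x : ℕ) (hc : G.val c = List.replicate x a) :
    G.val b = List.replicate (2 * x + 1) a := by
  rw [SLP.val_def, hb]
  simp [hc, ← List.append_assoc, ← List.replicate_add]
  rw [List.replicate_succ', two_mul]

lemma val_embed {α : Type} (G G' : SLP α) (φ : Fin G.n → Fin G'.n)
    (hφ : ∀ i, G'.rhs (φ i) = (G.rhs i).map (Sum.map φ id)) :
    ∀ i, G'.val (φ i) = G.val i := by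
  have H : ∀ n (i : Fin G.n), i.val < n → G'.val (φ i) = G.val i := by
    intro n
    induction n with
    | zero => omega
    | succ n ih =>
      intro i hi
      rw [SLP.val_def, SLP.val_def, hφ, List.map_map]
      congr 1
      apply List.map_congr_left
      intro s hs
      rcases s with j | a
      · simpa using ih j (by have := G.dec i j hs; omega)
      · simp
  exact fun i => H (i.val + 1) i (by omega)

lemma key_flat {β : Type} (x : β) (f : ℕ → List β) :
    ∀ t, f 0 ++ (List.range t).flatMap (fun j => x :: f (j + 1)) =
      (List.range t).flatMap (fun j => f j ++ [x]) ++ f t := by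
  intro t
  induction t with
  | zero => simp
  | succ t ih =>
    rw [List.range_succ, List.flatMap_append, List.flatMap_append, ← List.append_assoc, ih]
    simp [List.append_assoc]

lemma flatMap_finRange {β : Type} (n : ℕ) (f : Fin n → List β) (g : ℕ → List β)
    (h : ∀ j : Fin n, f j = g j.val) :
    (List.finRange n).flatMap f = (List.range n).flatMap g := by
  have hf : f = fun j => g j.val := funext h
  have hr : (List.finRange n).map (fun i : Fin n => (i : ℕ)) = List.range n :=
    List.ext_getElem (by simp) (by simp)
  rw [hf, ← hr, List.flatMap_map]

/-- The rhs function of the extended SLP: copies `r` on `[0,m)`, an alias for `st` at `m`,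
doubling rules at `m+1,...,m+t`, and the start rule at `m+t+1`. -/
def extRhs (m t : ℕ) (N : ℕ → ℕ) (r : Fin m → List (Fin m ⊕ Fin 2)) (st : Fin m) :
    Fin (m + (t + 2)) → List (Fin (m + (t + 2)) ⊕ Fin 2) := fun i =>
  if h : i.val < m then (r ⟨i.val, h⟩).map (Sum.map (Fin.castLE (Nat.le_add_right m (t + 2))) id)
  else if i.val = m then [.inl (Fin.castLE (Nat.le_add_right m (t + 2)) st)]
  else if i.val < m + (t + 1) then
    [.inl ⟨i.val - 1, lt_of_le_of_lt (Nat.sub_le _ _) i.isLt⟩,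
     .inl ⟨i.val - 1, lt_of_le_of_lt (Nat.sub_le _ _) i.isLt⟩] ++
      (if N (i.val - m + 1) = 2 * N (i.val - m) then [] else [.inr 0])
  else
    .inl ⟨m, by omega⟩ :: (List.finRange t).flatMap
      (fun j => [.inr 1, .inl ⟨m + j.val + 1, by have := j.isLt; omega⟩])

lemma extRhs_lt {m t : ℕ} {N : ℕ → ℕ} {r : Fin m → List (Fin m ⊕ Fin 2)} {st : Fin m}
    (i : Fin (m + (t + 2))) (h : i.val < m) :
    extRhs m t N r st i =
      (r ⟨i.val, h⟩).map (Sum.map (Fin.castLE (Nat.le_add_right m (t + 2))) id) := by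
  rw [extRhs, dif_pos h]

lemma extRhs_base {m t : ℕ} {N : ℕ → ℕ} {r : Fin m → List (Fin m ⊕ Fin 2)} {st : Fin m}
    (i : Fin (m + (t + 2))) (h : i.val = m) :
    extRhs m t N r st i = [.inl (Fin.castLE (Nat.le_add_right m (t + 2)) st)] := by
  rw [extRhs, dif_neg (by omega), if_pos h]

lemma extRhs_chain {m t : ℕ} {N : ℕ → ℕ} {r : Fin m → List (Fin m ⊕ Fin 2)} {st : Fin m}
    (i : Fin (m + (t + 2))) (j : ℕ) (hij : i.val = m + j) (h1 : 1 ≤ j) (h2 : j ≤ t) :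
    extRhs m t N r st i =
      [.inl ⟨m + (j - 1), by omega⟩, .inl ⟨m + (j - 1), by omega⟩] ++
        (if N (j + 1) = 2 * N j then [] else [.inr 0]) := by
  rw [extRhs, dif_neg (by omega), if_neg (by omega), if_pos (by omega)]
  have e1 : i.val - 1 = m + (j - 1) := by omega
  have e2 : i.val - m + 1 = j + 1 := by omega
  have e3 : i.val - m = j := by omega
  simp [e1, e2, e3]

lemma extRhs_top {m t : ℕ} {N : ℕ → ℕ} {r : Fin m → List (Fin m ⊕ Fin 2)} {st : Fin m}
    (i : Fin (m + (t + 2))) (h : i.val = m + t + 1) :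
    extRhs m t N r st i =
      .inl ⟨m, by omega⟩ :: (List.finRange t).flatMap
        (fun j => [.inr 1, .inl ⟨m + j.val + 1, by have := j.isLt; omega⟩]) := by
  rw [extRhs, dif_neg (by omega), if_neg (by omega), if_neg (by omega)]

lemma extRhs_dec (m t : ℕ) (N : ℕ → ℕ) (r : Fin m → List (Fin m ⊕ Fin 2)) (st : Fin m)
    (hr : ∀ i j, Sum.inl j ∈ r i → (j : ℕ) < (i : ℕ)) :
    ∀ i j, Sum.inl j ∈ extRhs m t N r st i → (j : ℕ) < (i : ℕ) := by
  intro i j hj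
  rcases Nat.lt_trichotomy i.val m with h | h | h
  · rw [extRhs_lt i h] at hj
    simp only [List.mem_map] at hj
    obtain ⟨s, hs, hmap⟩ := hj
    rcases s with j' | a
    · simp only [Sum.map_inl, Sum.inl.injEq] at hmap
      subst hmap
      have := hr ⟨i.val, h⟩ j' hs
      simpa using this
    · simp at hmap
  · rw [extRhs_base i h] at hj
    simp only [List.mem_singleton, Sum.inl.injEq] at hj
    subst hj
    have := st.isLt
    simp only [Fin.coe_castLE]
    omega
  · by_cases h2 : i.val < m + (t + 1)
    · rw [extRhs_chain i (i.val - m) (by omega) (by omega) (by omega)] at hj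
      have hj' : j = (⟨m + (i.val - m - 1), by omega⟩ : Fin (m + (t + 2))) := by
        split at hj <;> simpa using hj
      subst hj'
      simp only []
      omega
    · have hi : i.val = m + t + 1 := by have := i.isLt; omega
      rw [extRhs_top i hi] at hj
      rcases List.mem_cons.1 hj with hj | hj
      · simp only [Sum.inl.injEq] at hj
        subst hj
        simp only []
        omega
      · simp only [List.mem_flatMap] at hj
        obtain ⟨j', _, hj⟩ := hj
        have hjlt := j'.isLt
        simp only [List.mem_cons, List.not_mem_nil, or_false, Sum.inl.injEq,
          reduceCtorEq, false_or] at hj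
        subst hj
        simp only []
        omega

lemma extRhs_ne (m t : ℕ) (N : ℕ → ℕ) (r : Fin m → List (Fin m ⊕ Fin 2)) (st : Fin m)
    (hr : ∀ i, r i ≠ []) : ∀ i, extRhs m t N r st i ≠ [] := by
  intro i
  rcases Nat.lt_trichotomy i.val m with h | h | h
  · rw [extRhs_lt i h]
    simpa using hr ⟨i.val, h⟩
  · rw [extRhs_base i h]; simp
  · by_cases h2 : i.val < m + (t + 1)
    · rw [extRhs_chain i (i.val - m) (by omega) (by omega) (by omega)]; simp
    · rw [extRhs_top i (by have := i.isLt; omega)]; simp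

lemma flatten_map_pair {β γ δ : Type} (E : δ → List β) (u v : γ → δ) (l : List γ) :
    (List.map E (l.flatMap (fun j => [u j, v j]))).flatten =
      l.flatMap (fun j => E (u j) ++ E (v j)) := by
  induction l with
  | nil => simp
  | cons a l ih => simp [ih]

lemma main_bound (k : ℕ) (hk : 1 ≤ k) (N : ℕ → ℕ)
    (hstep : ∀ i, 1 ≤ i → i ≤ k - 1 → N (i + 1) = 2 * N i ∨ N (i + 1) = 2 * N i + 1)
    (G : SLP (Fin 2)) (hG : G.produces (List.replicate (N 1) 0)) :
    gsize (blockWord N k) ≤ G.size + 3 * (k - 1) + (2 * k + 1) := by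
  obtain ⟨t, rfl⟩ : ∃ t, k = t + 1 := ⟨k - 1, by omega⟩
  let G' : SLP (Fin 2) :=
    { n := G.n + (t + 2)
      rhs := extRhs G.n t N G.rhs G.start
      start := ⟨G.n + t + 1, by omega⟩
      dec := extRhs_dec _ _ _ _ _ G.dec
      ne := extRhs_ne _ _ _ _ _ G.ne }
  have hrhs : ∀ i, G'.rhs i = extRhs G.n t N G.rhs G.start i := fun _ => rfl
  have hGn : G'.n = G.n + (t + 2) := rfl
  have hemb : ∀ i : Fin G.n,
      G'.val (Fin.castLE (Nat.le_add_right G.n (t + 2)) i) = G.val i := by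
    apply val_embed
    intro i
    rw [hrhs, extRhs_lt _ (by simpa using i.isLt)]
    rfl
  have hG' : G.val G.start = List.replicate (N 1) 0 := hG
  have hB : ∀ j (_ : j ≤ t),
      G'.val ⟨G.n + j, by omega⟩ = List.replicate (N (j + 1)) 0 := by
    intro j
    induction j with
    | zero =>
      intro _
      rw [SLP.val_def, hrhs, extRhs_base _ (by simp)]
      simp [hemb G.start, hG']
    | succ j ih =>
      intro hj1
      have hrule : G'.rhs ⟨G.n + (j + 1), by omega⟩ =
          [.inl ⟨G.n + j, by omega⟩, .inl ⟨G.n + j, by omega⟩] ++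
            (if N ((j + 1) + 1) = 2 * N (j + 1) then [] else [.inr 0]) := by
        rw [hrhs, extRhs_chain _ (j + 1) rfl (by omega) (by omega)]
        rfl
      have hcases := hstep (j + 1) (by omega) (by omega)
      by_cases hc : N (j + 1 + 1) = 2 * N (j + 1)
      · rw [if_pos hc, List.append_nil] at hrule
        rw [hc]
        exact val_two G' _ _ hrule (N (j + 1)) 0 (ih (by omega))
      · have h2 : N (j + 1 + 1) = 2 * N (j + 1) + 1 := by
          rcases hcases with h | h
          · exact absurd h hc
          · exact h
        rw [if_neg hc] at hrule
        rw [h2]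
        exact val_two1 G' _ _ 0 (by simpa using hrule) (N (j + 1)) (ih (by omega))
  have hprod : G'.produces (blockWord N (t + 1)) := by
    show G'.val _ = _
    rw [SLP.val_def, hrhs, extRhs_top _ rfl]
    simp only [List.map_cons, Sum.elim_inl, List.flatten_cons]
    have h0 := hB 0 (by omega)
    simp only [Nat.add_zero] at h0
    rw [h0, flatten_map_pair]
    rw [flatMap_finRange t _ (fun j => (1 : Fin 2) :: List.replicate (N (j + 1 + 1)) 0)
      (fun j => by
        have e : (⟨G.n + j.val + 1, by have := j.isLt; omega⟩ : Fin (G.n + (t + 2))) =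
            ⟨G.n + (j.val + 1), by have := j.isLt; omega⟩ := rfl
        simp only [Sum.elim_inr, Sum.elim_inl, e, hB (j.val + 1) (by have := j.isLt; omega)]
        rfl)]
    rw [blockWord]
    simp only [Nat.add_sub_cancel]
    exact key_flat (1 : Fin 2) (fun j => List.replicate (N (j + 1)) 0) t
  -- size computation
  have hs1 : G'.size = ∑ i : Fin G.n, (G'.rhs (Fin.castAdd (t + 2) i)).length +
      ∑ i : Fin (t + 2), (G'.rhs (Fin.natAdd G.n i)).length := by
    rw [SLP.size, Fin.sum_univ_add]
  have hcopy : ∑ i : Fin G.n, (G'.rhs (Fin.castAdd (t + 2) i)).length = G.size := by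
    rw [SLP.size]
    apply Finset.sum_congr rfl
    intro i _
    rw [hrhs, extRhs_lt _ (by simpa using i.isLt), List.length_map]
    rfl
  have hsum2 : ∑ i : Fin (t + 1 + 1), (G'.rhs (Fin.natAdd G.n i)).length ≤
      1 + 3 * t + (2 * t + 1) := by
    rw [Fin.sum_univ_castSucc, Fin.sum_univ_succ]
    have hbase : (G'.rhs (Fin.natAdd G.n (Fin.castSucc 0))).length = 1 := by
      rw [hrhs, extRhs_base _ (by simp)]
      rfl
    have htop : (G'.rhs (Fin.natAdd G.n (Fin.last (t + 1)))).length = 1 + 2 * t := by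
      rw [hrhs, extRhs_top _ (by simp [Fin.natAdd, Fin.last]; omega)]
      simp [List.length_flatMap, Function.comp_def, List.sum_replicate, smul_eq_mul]
      omega
    have hmid : ∑ i : Fin t, (G'.rhs (Fin.natAdd G.n (Fin.castSucc i.succ))).length ≤ 3 * t := by
      have : ∀ i : Fin t, (G'.rhs (Fin.natAdd G.n (Fin.castSucc i.succ))).length ≤ 3 := by
        intro i
        have hi := i.isLt
        rw [hrhs, extRhs_chain _ (i.val + 1) (by simp [Fin.natAdd]) (by omega) (by omega)]
        rw [List.length_append]
        have : (if N (i.val + 1 + 1) = 2 * N (i.val + 1) then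
            ([] : List (Fin (G.n + (t + 2)) ⊕ Fin 2)) else [.inr 0]).length ≤ 1 := by
          split <;> simp
        simp only [List.length_cons, List.length_nil]
        omega
      calc ∑ i : Fin t, (G'.rhs (Fin.natAdd G.n (Fin.castSucc i.succ))).length
          ≤ ∑ _i : Fin t, 3 := Finset.sum_le_sum (fun i _ => this i)
        _ = 3 * t := by simp [Finset.sum_const, mul_comm]
    rw [hbase, htop]
    omega
  have hsz : G'.size ≤ G.size + (1 + 3 * t + (2 * t + 1)) := by
    rw [hs1, hcopy]
    have : ∑ i : Fin (t + 2), (G'.rhs (Fin.natAdd G.n i)).length =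
        ∑ i : Fin (t + 1 + 1), (G'.rhs (Fin.natAdd G.n i)).length := rfl
    rw [this]
    omega
  have hg := gsize_le_of G' hprod
  have : (t + 1) - 1 = t := by omega
  rw [this]
  omega

/-- Rhs of the doubling-chain SLP deriving `a^n` with `n = M L`, `M 0 = 1`. -/
def chainRhs (L : ℕ) (M : ℕ → ℕ) : Fin (L + 1) → List (Fin (L + 1) ⊕ Fin 2) := fun i =>
  if i.val = 0 then [.inr 0]
  else [.inl ⟨i.val - 1, lt_of_le_of_lt (Nat.sub_le _ _) i.isLt⟩,
        .inl ⟨i.val - 1, lt_of_le_of_lt (Nat.sub_le _ _) i.isLt⟩] ++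
    (if M i.val = 2 * M (i.val - 1) then [] else [.inr 0])

lemma chainRhs_zero {L : ℕ} {M : ℕ → ℕ} (i : Fin (L + 1)) (h : i.val = 0) :
    chainRhs L M i = [.inr 0] := by
  rw [chainRhs, if_pos h]

lemma chainRhs_pos {L : ℕ} {M : ℕ → ℕ} (i : Fin (L + 1)) (h : i.val ≠ 0) :
    chainRhs L M i =
      [.inl ⟨i.val - 1, lt_of_le_of_lt (Nat.sub_le _ _) i.isLt⟩,
       .inl ⟨i.val - 1, lt_of_le_of_lt (Nat.sub_le _ _) i.isLt⟩] ++
        (if M i.val = 2 * M (i.val - 1) then [] else [.inr 0]) := by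
  rw [chainRhs, if_neg h]

lemma lemA (n : ℕ) (hn : 1 ≤ n) : ∃ G : SLP (Fin 2),
    G.produces (List.replicate n 0) ∧ G.size ≤ 3 * Nat.log 2 n + 3 := by
  set L := Nat.log 2 n with hL
  set M : ℕ → ℕ := fun j => n / 2 ^ (L - j) with hM
  have hM0 : M 0 = 1 := by
    have h1 : 2 ^ L ≤ n := Nat.pow_log_le_self 2 (by omega)
    have h2 : n < 2 ^ (L + 1) := Nat.lt_pow_succ_log_self (by norm_num) n
    have h3 : 2 ^ (L + 1) = 2 ^ L * 2 := pow_succ 2 L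
    have h0 : 0 < 2 ^ L := by positivity
    have h4 : n / 2 ^ L < 2 := Nat.div_lt_of_lt_mul (by omega)
    have h5 : 1 ≤ n / 2 ^ L := (Nat.one_le_div_iff h0).2 h1
    simp only [hM, Nat.sub_zero]
    omega
  have hML : M L = n := by simp [hM]
  have hMstep : ∀ j, j < L → M j = M (j + 1) / 2 := by
    intro j hj
    simp only [hM]
    have e : L - j = (L - (j + 1)) + 1 := by omega
    rw [e, pow_succ, ← Nat.div_div_eq_div_mul]
  let G : SLP (Fin 2) :=
    { n := L + 1
      rhs := chainRhs L M
      start := ⟨L, by omega⟩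
      dec := by
        intro i j hj
        by_cases h : i.val = 0
        · rw [chainRhs_zero i h] at hj
          simp at hj
        · rw [chainRhs_pos i h] at hj
          have hj' : j = (⟨i.val - 1, lt_of_le_of_lt (Nat.sub_le _ _) i.isLt⟩ : Fin (L + 1)) := by
            split at hj <;> simpa using hj
          subst hj'
          simp only []
          omega
      ne := by
        intro i
        by_cases h : i.val = 0
        · rw [chainRhs_zero i h]; simp
        · rw [chainRhs_pos i h]; simp }
  have hrhs : ∀ i, G.rhs i = chainRhs L M i := fun _ => rfl
  have hGn : G.n = L + 1 := rfl
  have hval : ∀ j (_ : j ≤ L), G.val ⟨j, by omega⟩ = List.replicate (M j) 0 := by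
    intro j
    induction j with
    | zero =>
      intro _
      rw [SLP.val_def, hrhs, chainRhs_zero _ rfl, hM0]
      simp
    | succ j ih =>
      intro hj
      have hrule : G.rhs ⟨j + 1, by omega⟩ =
          [.inl ⟨j, by omega⟩, .inl ⟨j, by omega⟩] ++
            (if M (j + 1) = 2 * M j then [] else [.inr 0]) := by
        rw [hrhs, chainRhs_pos _ (by simp)]
        rfl
      have hd := hMstep j (by omega)
      have hor : M (j + 1) = 2 * M j ∨ M (j + 1) = 2 * M j + 1 := by
        have := Nat.div_add_mod (M (j + 1)) 2
        have := Nat.mod_lt (M (j + 1)) (show 0 < 2 by norm_num)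
        omega
      by_cases hc : M (j + 1) = 2 * M j
      · rw [if_pos hc, List.append_nil] at hrule
        rw [hc]
        exact val_two G _ _ hrule (M j) 0 (ih (by omega))
      · have h2 : M (j + 1) = 2 * M j + 1 := by
          rcases hor with h | h
          · exact absurd h hc
          · exact h
        rw [if_neg hc] at hrule
        rw [h2]
        exact val_two1 G _ _ 0 (by simpa using hrule) (M j) (ih (by omega))
  have hprod : G.produces (List.replicate n 0) := by
    show G.val _ = _
    rw [hval L le_rfl, hML]
  have hsize : G.size ≤ 3 * L + 3 := by
    rw [SLP.size, Fin.sum_univ_succ]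
    have h0 : (G.rhs 0).length = 1 := by
      rw [hrhs, chainRhs_zero _ rfl]
      rfl
    have hrest : ∀ i : Fin L, (G.rhs i.succ).length ≤ 3 := by
      intro i
      rw [hrhs, chainRhs_pos _ (by simp), List.length_append]
      have : (if M (i.succ : Fin (L+1)).val = 2 * M ((i.succ : Fin (L+1)).val - 1) then
          ([] : List (Fin (L + 1) ⊕ Fin 2)) else [.inr 0]).length ≤ 1 := by
        split <;> simp
      simp only [List.length_cons, List.length_nil]
      omega
    have : ∑ i : Fin L, (G.rhs i.succ).length ≤ 3 * L := by
      calc ∑ i : Fin L, (G.rhs i.succ).length ≤ ∑ _i : Fin L, 3 :=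
            Finset.sum_le_sum (fun i _ => hrest i)
        _ = 3 * L := by simp [Finset.sum_const, mul_comm]
    omega
  exact ⟨G, hprod, hsize⟩

/-- If `N 1 ≥ 2` and `N (i+1) ∈ {2 · N i, 2 · N i + 1}` for `1 ≤ i ≤ k - 1`, then
`g(a^{N 1} b ⋯ b a^{N k}) ≤ g(a^{N 1}) + 3(k-1) + (2k+1) ∈ O(k + log (N 1))`. -/
theorem repair_stmt_17 (k : ℕ) (hk : 1 ≤ k) (N : ℕ → ℕ) (h1 : 2 ≤ N 1)
    (hstep : ∀ i, 1 ≤ i → i ≤ k - 1 → N (i + 1) = 2 * N i ∨ N (i + 1) = 2 * N i + 1) :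
    gsize (blockWord N k) ≤
      gsize (List.replicate (N 1) (0 : Fin 2)) + 3 * (k - 1) + (2 * k + 1) ∧
    gsize (blockWord N k) ≤
      (3 * Nat.log 2 (N 1) + 3) + 3 * (k - 1) + (2 * k + 1) := by
  obtain ⟨GA, hGAprod, hGAsize⟩ := lemA (N 1) (by omega)
  have hne : {s | ∃ G : SLP (Fin 2),
      G.produces (List.replicate (N 1) (0 : Fin 2)) ∧ G.size = s}.Nonempty :=
    ⟨GA.size, GA, hGAprod, rfl⟩
  obtain ⟨Gopt, hprod, hsz⟩ := Nat.sInf_mem hne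
  have h1' := main_bound k hk N hstep Gopt hprod
  have h2' := main_bound k hk N hstep GA hGAprod
  have hsz' : Gopt.size = gsize (List.replicate (N 1) (0 : Fin 2)) := hsz
  exact ⟨by omega, by omega⟩
end
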